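/- arXiv:1203.3222 — 3 statements merged into one kernel-verified Lean document; each statement's English description precedes it below -/
import Mathlib

section
/- If f : ℝ → ℝ is a discontinuous n-monomial of even degree n, then the function F : ℝ² → ℝ given by F(x,h) = f(x+h) - f(x) has graph {(x, h, F(x,h))} dense in ℝ³. -/
noncomputable def fdiff (h : ℝ) (f : ℝ → ℝ) : ℝ → ℝ := fun x => f (x + h) - f x

def IsMonomial (n : ℕ) (f : ℝ → ℝ) : Prop :=
  ∀ x h : ℝ, (1 / (n.factorial : ℝ)) * ((fdiff h)^[n] f) x = f h

open Finset Polynomial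

lemma fdiff_iter_sum (s : ℝ) (g : ℝ → ℝ) (m : ℕ) (u : ℝ) :
    (fdiff s)^[m] g u = ∑ i ∈ range (m+1), ((-1:ℝ)^(m-i) * (m.choose i)) * g (u + i*s) := by
  have : fdiff = fwdDiff (M := ℝ) (G := ℝ) := rfl
  rw [this, fwdDiff_iter_eq_sum_shift]
  refine Finset.sum_congr rfl fun i _ => ?_
  push_cast [zsmul_eq_mul, nsmul_eq_mul]
  ring

noncomputable def dstep (m : ℝ) (Q : ℝ[X]) : ℝ[X] := Polynomial.taylor m Q - Q

lemma dstep_eval (m : ℝ) (Q : ℝ[X]) (u : ℝ) :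
    (dstep m Q).eval u = Q.eval (u + m) - Q.eval u := by
  simp [dstep, Polynomial.taylor_apply, Polynomial.eval_comp, add_comm]

lemma hasse_eval_of_le (Q : ℝ[X]) (k : ℕ) (hQ : Q.natDegree ≤ k + 1) (m : ℝ) :
    (Polynomial.hasseDeriv k Q).eval m = Q.coeff k + (k+1) * Q.coeff (k+1) * m := by
  have h1 : (Polynomial.hasseDeriv k Q).natDegree ≤ 1 := by
    refine (Polynomial.natDegree_hasseDeriv_le Q k).trans ?_
    omega
  have h2 := Polynomial.eq_X_add_C_of_natDegree_le_one h1
  have hc0 : (Polynomial.hasseDeriv k Q).coeff 0 = Q.coeff k := by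
    rw [Polynomial.hasseDeriv_coeff]; simp
  have hc1 : (Polynomial.hasseDeriv k Q).coeff 1 = (k+1) * Q.coeff (k+1) := by
    rw [Polynomial.hasseDeriv_coeff]
    have : (1 + k).choose k = k + 1 := by
      rw [Nat.add_comm, Nat.choose_succ_self_right]
    rw [this]
    push_cast
    ring_nf
  calc (Polynomial.hasseDeriv k Q).eval m
      = (C ((Polynomial.hasseDeriv k Q).coeff 1) * X + C ((Polynomial.hasseDeriv k Q).coeff 0)).eval m := by rw [← h2]
    _ = Q.coeff k + (k+1) * Q.coeff (k+1) * m := by rw [hc0, hc1]; simp; ring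

lemma dstep_coeff (m : ℝ) (Q : ℝ[X]) (k : ℕ) (hQ : Q.natDegree ≤ k + 1) :
    (dstep m Q).coeff k = (k+1) * m * Q.coeff (k+1) := by
  simp only [dstep, Polynomial.coeff_sub, Polynomial.taylor_coeff]
  rw [hasse_eval_of_le Q k hQ]
  ring

lemma natDegree_dstep_le (m : ℝ) (Q : ℝ[X]) (k : ℕ) (hQ : Q.natDegree ≤ k + 1) :
    (dstep m Q).natDegree ≤ k := by
  by_cases h0 : Q.natDegree = 0
  · obtain ⟨c, rfl⟩ := Polynomial.natDegree_eq_zero.mp h0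
    simp [dstep, Polynomial.taylor_C]
  · have hQ0 : Q ≠ 0 := fun h => h0 (by simp [h])
    have htay : (Polynomial.taylor m Q).natDegree = Q.natDegree := Polynomial.natDegree_taylor Q m
    have htay0 : Polynomial.taylor m Q ≠ 0 := by
      intro h
      rw [h] at htay
      exact h0 htay.symm
    have hlc : (Polynomial.taylor m Q).leadingCoeff = Q.leadingCoeff := by
      unfold Polynomial.leadingCoeff
      rw [htay, Polynomial.taylor_coeff]
      have h1 : (Polynomial.hasseDeriv Q.natDegree Q).natDegree ≤ 0 := by
        refine (Polynomial.natDegree_hasseDeriv_le Q _).trans (by omega)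
      have h2 := Polynomial.eq_C_of_natDegree_le_zero h1
      rw [h2, Polynomial.eval_C, Polynomial.hasseDeriv_coeff]
      simp
    have hdeg : (Polynomial.taylor m Q).degree = Q.degree := by
      rw [Polynomial.degree_eq_natDegree htay0, Polynomial.degree_eq_natDegree hQ0, htay]
    by_cases hz : dstep m Q = 0
    · simp [hz]
    · have hlt : (dstep m Q).degree < Q.degree := by
        have := Polynomial.degree_sub_lt hdeg htay0 hlc
        rw [← hdeg]; exact (by simpa [dstep] using this)
      have := Polynomial.natDegree_lt_natDegree hz (by rw [← hdeg] at hlt; rw [hdeg] at hlt; exact hlt)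
      omega

lemma dstep_iter_eq_C (m : ℝ) : ∀ (k : ℕ) (Q : ℝ[X]), Q.natDegree ≤ k →
    (dstep m)^[k] Q = C ((k.factorial : ℝ) * m^k * Q.coeff k) := by
  intro k
  induction k with
  | zero =>
    intro Q hQ
    have := Polynomial.eq_C_of_natDegree_le_zero hQ
    simpa using this
  | succ k IH =>
    intro Q hQ
    rw [Function.iterate_succ_apply]
    rw [IH (dstep m Q) (natDegree_dstep_le m Q k hQ), dstep_coeff m Q k hQ]
    congr 1
    rw [Nat.factorial_succ]
    push_cast
    ring

lemma dstep_iter_zero (m : ℝ) (k : ℕ) (Q : ℝ[X]) (hQ : Q.natDegree ≤ k) :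
    (dstep m)^[k+1] Q = 0 := by
  rw [Function.iterate_succ_apply', dstep_iter_eq_C m k Q hQ, dstep, Polynomial.taylor_C, sub_self]

lemma fdiff_iter_poly (s : ℝ) (k : ℕ) (Q : ℝ[X]) :
    (fdiff s)^[k] (fun u => Q.eval u) = fun u => ((dstep s)^[k] Q).eval u := by
  induction k generalizing Q with
  | zero => simp
  | succ k IH =>
    rw [Function.iterate_succ_apply, Function.iterate_succ_apply]
    have : fdiff s (fun u => Q.eval u) = fun u => (dstep s Q).eval u := by
      funext u; simp [fdiff, dstep_eval]
    rw [this, IH]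

def Up (f : ℝ → ℝ) (x : ℝ) : Prop :=
  ∀ δ ε T : ℝ, 0 < δ → 0 < ε → f x ≤ T → ∃ u, |u - x| < δ ∧ |f u - T| < ε

def Down (f : ℝ → ℝ) (x : ℝ) : Prop :=
  ∀ δ ε T : ℝ, 0 < δ → 0 < ε → T ≤ f x → ∃ u, |u - x| < δ ∧ |f u - T| < ε


section Mono

variable {n : ℕ} {f : ℝ → ℝ}

lemma hD (hm : IsMonomial n f) : ∀ (x h : ℝ), (fdiff h)^[n] f x = (n.factorial : ℝ) * f h := by
  intro x h
  have h1 := hm x h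
  have h2 : (n.factorial : ℝ) ≠ 0 := Nat.cast_ne_zero.mpr (Nat.factorial_ne_zero n)
  field_simp at h1
  linarith [h1]

lemma hD1 (hm : IsMonomial n f) : ∀ (s u : ℝ), (fdiff s)^[n+1] f u = 0 := by
  intro s u
  rw [Function.iterate_succ_apply']
  show ((fdiff s)^[n] f) (u + s) - ((fdiff s)^[n] f) u = 0
  rw [hD hm, hD hm]
  ring

lemma newton_int (hm : IsMonomial n f) (x₀ s : ℝ) :
    ∃ P : ℝ[X], P.natDegree ≤ n ∧ ∀ j : ℤ, f (x₀ + (j:ℝ) * s) = P.eval (j:ℝ) := by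
  have hinj : Set.InjOn (fun i : ℕ => (i:ℝ)) (range (n+1)) :=
    fun a _ b _ hab => Nat.cast_injective hab
  set P : ℝ[X] := Lagrange.interpolate (range (n+1)) (fun i : ℕ => (i:ℝ))
    (fun i => f (x₀ + i * s)) with hP
  have hdeg : P.degree < ((n+1 : ℕ) : WithBot ℕ) := by
    have := Lagrange.degree_interpolate_lt (v := fun i : ℕ => (i:ℝ))
      (fun i => f (x₀ + i * s)) hinj
    rw [← hP] at this
    simpa using this
  have hnd : P.natDegree ≤ n := by
    by_cases h0 : P = 0
    · simp [h0]
    · have h2 : P.natDegree < n + 1 :=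
        (Polynomial.natDegree_lt_iff_degree_lt h0).mpr (by exact_mod_cast hdeg)
      omega
  have hnode : ∀ i : ℕ, i ≤ n → P.eval (i : ℝ) = f (x₀ + i * s) := by
    intro i hi
    have := Lagrange.eval_interpolate_at_node (v := fun i : ℕ => (i:ℝ))
      (fun i => f (x₀ + i * s)) hinj (Finset.mem_range.mpr (by omega) : i ∈ range (n+1))
    rw [← hP] at this
    simpa using this
  set D : ℤ → ℝ := fun j => f (x₀ + (j:ℝ) * s) - P.eval (j:ℝ) with hDdef
  have hnodeD : ∀ i : ℕ, i ≤ n → D (i : ℤ) = 0 := by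
    intro i hi
    simp only [hDdef, Int.cast_natCast]
    rw [hnode i hi]
    ring
  have hrec : ∀ k : ℤ, ∑ i ∈ range (n+2),
      ((-1:ℝ)^(n+1-i) * ((n+1).choose i)) * D (k + i) = 0 := by
    intro k
    have hf0 : ∑ i ∈ range (n+2), ((-1:ℝ)^(n+1-i) * ((n+1).choose i)) * f (x₀ + ((k:ℝ) + i) * s) = 0 := by
      have h2 := hD1 hm s (x₀ + k * s)
      rw [fdiff_iter_sum] at h2
      calc ∑ i ∈ range (n+2), ((-1:ℝ)^(n+1-i) * ((n+1).choose i)) * f (x₀ + ((k:ℝ) + i) * s)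
          = ∑ i ∈ range (n+2), ((-1:ℝ)^(n+1-i) * ((n+1).choose i)) * f ((x₀ + (k:ℝ)*s) + i*s) := by
            refine Finset.sum_congr rfl fun i _ => ?_
            ring_nf
        _ = 0 := h2
    have hp0 : ∑ i ∈ range (n+2), ((-1:ℝ)^(n+1-i) * ((n+1).choose i)) * P.eval ((k:ℝ) + i) = 0 := by
      have h1 : (fdiff 1)^[n+1] (fun u => P.eval u) (k:ℝ) = 0 := by
        rw [fdiff_iter_poly, dstep_iter_zero 1 n P hnd]
        simp
      rw [fdiff_iter_sum] at h1
      calc ∑ i ∈ range (n+2), ((-1:ℝ)^(n+1-i) * ((n+1).choose i)) * P.eval ((k:ℝ) + i)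
          = ∑ i ∈ range (n+2), ((-1:ℝ)^(n+1-i) * ((n+1).choose i)) * P.eval ((k:ℝ) + i*1) := by
            simp
        _ = 0 := h1
    have heq : ∑ i ∈ range (n+2), ((-1:ℝ)^(n+1-i) * ((n+1).choose i)) * D (k + i)
        = ∑ i ∈ range (n+2), (((-1:ℝ)^(n+1-i) * ((n+1).choose i)) * f (x₀ + ((k:ℝ) + i) * s)
          - ((-1:ℝ)^(n+1-i) * ((n+1).choose i)) * P.eval ((k:ℝ) + i)) := by
      refine Finset.sum_congr rfl fun i _ => ?_
      simp only [hDdef]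
      push_cast
      ring
    rw [heq, Finset.sum_sub_distrib, hf0, hp0]
    ring
  have hnat : ∀ j : ℕ, D (j : ℤ) = 0 := by
    intro j
    induction j using Nat.strong_induction_on with
    | _ j IH =>
      by_cases hj : j ≤ n
      · exact hnodeD j hj
      · have hk : n + 1 ≤ j := by omega
        have h1 := hrec ((j - (n+1) : ℕ) : ℤ)
        rw [Finset.sum_range_succ] at h1
        have hz : ∀ i ∈ range (n+1),
            ((-1:ℝ)^(n+1-i) * ((n+1).choose i)) * D (((j - (n+1) : ℕ) : ℤ) + i) = 0 := by
          intro i hi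
          have hmem := Finset.mem_range.mp hi
          have hcast : ((j - (n+1) : ℕ) : ℤ) + (i : ℤ) = ((j - (n+1) + i : ℕ) : ℤ) := by
            push_cast; ring
          rw [hcast, IH (j - (n+1) + i) (by omega)]
          ring
        rw [Finset.sum_eq_zero hz] at h1
        have hcast2 : ((j - (n+1) : ℕ) : ℤ) + ((n+1 : ℕ) : ℤ) = (j : ℤ) := by omega
        rw [hcast2] at h1
        have hcoef : ((-1:ℝ)^(n+1-(n+1)) * ((n+1).choose (n+1))) = 1 := by simp
        rw [hcoef] at h1
        linarith [h1]
  have hneg : ∀ m : ℕ, D (-(m : ℤ)) = 0 := by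
    intro m
    induction m using Nat.strong_induction_on with
    | _ m IH =>
      by_cases hm0 : m = 0
      · subst hm0; simpa using hnodeD 0 (by omega)
      · have h1 := hrec (-(m : ℤ))
        rw [Finset.sum_range_succ'] at h1
        have hz : ∀ i ∈ range (n+1),
            ((-1:ℝ)^(n+1-(i+1)) * ((n+1).choose (i+1))) * D (-(m:ℤ) + ((i+1 : ℕ) : ℤ)) = 0 := by
          intro i hi
          rcases le_or_gt m (i+1) with hc | hc
          · have e : (-(m:ℤ) + ((i+1 : ℕ) : ℤ)) = ((i+1-m : ℕ) : ℤ) := by omega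
            rw [e, hnat]
            ring
          · have e : (-(m:ℤ) + ((i+1 : ℕ) : ℤ)) = -(((m-(i+1) : ℕ)) : ℤ) := by omega
            rw [e, IH (m - (i+1)) (by omega)]
            ring
        rw [Finset.sum_eq_zero hz] at h1
        simp only [Nat.cast_zero, add_zero, zero_add] at h1
        have hcoef : ((-1:ℝ)^(n+1-0) * ((n+1).choose 0)) ≠ 0 := by simp
        rcases mul_eq_zero.mp h1 with h | h
        · exact absurd h hcoef
        · exact h
  refine ⟨P, hnd, fun j => ?_⟩
  have hDj : D j = 0 := by
    rcases le_or_gt 0 j with hj | hj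
    · have := hnat j.toNat
      rwa [Int.toNat_of_nonneg hj] at this
    · have := hneg (-j).toNat
      rwa [Int.toNat_of_nonneg (by omega), neg_neg] at this
  exact sub_eq_zero.mp hDj


-- key: the alternating sum identity specialised through a polynomial
lemma sum_eval_eq_dstep (P : ℝ[X]) (m : ℝ) (k : ℕ) (u : ℝ) :
    ∑ i ∈ range (k+1), ((-1:ℝ)^(k-i) * (k.choose i)) * P.eval (u + i*m)
      = ((dstep m)^[k] P).eval u := by
  have h1 := congrFun (fdiff_iter_poly m k P) u
  rw [fdiff_iter_sum] at h1
  exact h1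

lemma exists_poly (hm : IsMonomial n f) (x y : ℝ) :
    ∃ P : ℝ[X], P.natDegree ≤ n ∧ (∀ q : ℚ, f (x + (q:ℝ) * y) = P.eval (q:ℝ)) ∧
      P.eval 0 = f x ∧ P.coeff n = f y := by
  obtain ⟨P₁, hd₁, hP₁⟩ := newton_int hm x y
  have key : ∀ q : ℚ, f (x + (q:ℝ) * y) = P₁.eval (q:ℝ) := by
    intro q
    set b : ℕ := q.den with hb
    have hbpos : 0 < b := q.pos
    have hbne : ((b:ℝ)) ≠ 0 := by positivity
    obtain ⟨Pb, hdb, hPb⟩ := newton_int hm x (y / b)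
    set Qb : ℝ[X] := Pb.comp (C (b:ℝ) * X) with hQb
    have hQbev : ∀ v : ℝ, Qb.eval v = Pb.eval ((b:ℝ) * v) := by
      intro v
      simp [hQb, Polynomial.eval_comp]
    have hQbj : ∀ j : ℤ, f (x + ((j:ℝ)/(b:ℝ)) * y) = Qb.eval ((j:ℝ)/(b:ℝ)) := by
      intro j
      rw [hQbev, mul_div_cancel₀ _ hbne]
      rw [show (((j:ℝ))/(b:ℝ)) * y = (j:ℝ) * (y/(b:ℝ)) by ring]
      exact hPb j
    have hdQb : Qb.natDegree ≤ n := by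
      have : Qb.natDegree = Pb.natDegree * (C (b:ℝ) * X).natDegree := Polynomial.natDegree_comp
      rw [this, Polynomial.natDegree_C_mul_X _ hbne, mul_one]
      exact hdb
    have hagree : ∀ i ∈ range (n+1), Qb.eval ((fun i : ℕ => (i:ℝ)) i) = P₁.eval ((fun i : ℕ => (i:ℝ)) i) := by
      intro i hi
      have h1 := hQbj ((b:ℤ) * i)
      have e1 : (((b:ℤ) * i : ℤ) : ℝ) / (b:ℝ) = (i:ℝ) := by
        push_cast
        field_simp
      rw [e1] at h1
      have h2 := hP₁ (i : ℤ)
      simp only [Int.cast_natCast] at h2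
      rw [← h1, ← h2]
    have hinj : Set.InjOn (fun i : ℕ => (i:ℝ)) (range (n+1)) :=
      fun a _ b _ hab => Nat.cast_injective hab
    have hQbP₁ : Qb = P₁ := by
      refine Polynomial.eq_of_degrees_lt_of_eval_index_eq (v := fun i : ℕ => (i:ℝ)) _ hinj ?_ ?_ hagree
      · refine lt_of_le_of_lt Polynomial.degree_le_natDegree ?_
        rw [Finset.card_range]
        exact_mod_cast Nat.lt_succ_of_le hdQb
      · refine lt_of_le_of_lt Polynomial.degree_le_natDegree ?_
        rw [Finset.card_range]
        exact_mod_cast Nat.lt_succ_of_le hd₁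
    have hcast : ((q:ℝ)) = ((q.num : ℝ))/((b:ℝ)) := by
      rw [hb, Rat.cast_def]
    rw [hcast, ← hQbP₁]
    exact hQbj q.num
  have hev0 : P₁.eval 0 = f x := by
    have := key 0
    simp at this
    rw [← this]
  have hcoeff : P₁.coeff n = f y := by
    have hfact : ((n.factorial : ℝ)) ≠ 0 := Nat.cast_ne_zero.mpr (Nat.factorial_ne_zero n)
    have h1 : ∑ i ∈ range (n+1), ((-1:ℝ)^(n-i) * (n.choose i)) * P₁.eval ((0:ℝ) + i*1)
        = (n.factorial : ℝ) * P₁.coeff n := by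
      rw [sum_eval_eq_dstep, dstep_iter_eq_C 1 n P₁ hd₁]
      simp
    have h2 : ∑ i ∈ range (n+1), ((-1:ℝ)^(n-i) * (n.choose i)) * P₁.eval ((0:ℝ) + i*1)
        = (n.factorial : ℝ) * f y := by
      have h3 : ∀ i : ℕ, P₁.eval ((0:ℝ) + i*1) = f (x + (i:ℝ) * y) := by
        intro i
        have := key (i : ℚ)
        push_cast at this
        rw [this]
        norm_num
      calc ∑ i ∈ range (n+1), ((-1:ℝ)^(n-i) * (n.choose i)) * P₁.eval ((0:ℝ) + i*1)
          = ∑ i ∈ range (n+1), ((-1:ℝ)^(n-i) * (n.choose i)) * f (x + i * y) := by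
            refine Finset.sum_congr rfl fun i _ => ?_
            rw [h3 i]
        _ = (fdiff y)^[n] f x := by rw [fdiff_iter_sum]
        _ = (n.factorial : ℝ) * f y := hD hm x y
    rw [h1] at h2
    exact mul_left_cancel₀ hfact h2
  exact ⟨P₁, hd₁, key, hev0, hcoeff⟩


lemma hom_nat (hm : IsMonomial n f) (m : ℕ) (y : ℝ) :
    f ((m:ℝ) * y) = (m:ℝ)^n * f y := by
  have hfact : ((n.factorial : ℝ)) ≠ 0 := Nat.cast_ne_zero.mpr (Nat.factorial_ne_zero n)
  obtain ⟨P, hd, key, -, hcoeff⟩ := exists_poly hm 0 y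
  have h1 : (n.factorial : ℝ) * f ((m:ℝ) * y) = (fdiff ((m:ℝ)*y))^[n] f 0 := (hD hm 0 _).symm
  rw [fdiff_iter_sum] at h1
  have h2 : ∀ i : ℕ, f ((0:ℝ) + (i:ℝ) * ((m:ℝ)*y)) = P.eval ((0:ℝ) + (i:ℝ)*(m:ℝ)) := by
    intro i
    have := key ((i*m : ℕ) : ℚ)
    push_cast at this
    rw [show (0:ℝ) + (i:ℝ) * ((m:ℝ)*y) = 0 + (i:ℝ)*(m:ℝ)*y by ring,
      show ((0:ℝ) + (i:ℝ)*(m:ℝ)) = (i:ℝ)*(m:ℝ) by ring]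
    exact this
  rw [Finset.sum_congr rfl (fun i _ => by rw [h2 i])] at h1
  rw [sum_eval_eq_dstep P (m:ℝ) n 0, dstep_iter_eq_C (m:ℝ) n P hd] at h1
  rw [Polynomial.eval_C, hcoeff] at h1
  have := mul_left_cancel₀ hfact (by linarith [h1] :
    (n.factorial : ℝ) * f ((m:ℝ) * y) = (n.factorial : ℝ) * ((m:ℝ)^n * f y))
  exact this

lemma neg_even (hm : IsMonomial n f) (hn : Even n) (y : ℝ) : f (-y) = f y := by
  have hfact : ((n.factorial : ℝ)) ≠ 0 := Nat.cast_ne_zero.mpr (Nat.factorial_ne_zero n)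
  have h1 : (n.factorial : ℝ) * f (-y) = (fdiff (-y))^[n] f ((n:ℝ)*y) := (hD hm _ _).symm
  rw [fdiff_iter_sum] at h1
  have h2 : ∀ i ∈ range (n+1), ((-1:ℝ)^(n-i) * (n.choose i)) * f ((n:ℝ)*y + (i:ℝ)*(-y))
      = ((-1:ℝ)^(n-(n-i)) * (n.choose (n-i))) * f ((0:ℝ) + ((n-i : ℕ):ℝ)*y) := by
    intro i hi
    have hin : i ≤ n := by have := Finset.mem_range.mp hi; omega
    have e1 : (n:ℝ)*y + (i:ℝ)*(-y) = ((n-i : ℕ):ℝ)*y := by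
      rw [Nat.cast_sub hin]; ring
    have e2 : ((0:ℝ) + ((n-i:ℕ):ℝ)*y) = ((n-i:ℕ):ℝ)*y := by ring
    rw [e1, e2]
    congr 2
    · -- signs
      have hnn : n - (n - i) = i := by omega
      rw [hnn]
      have key : (-1:ℝ)^(n-i) * (-1:ℝ)^i = 1 := by
        rw [← pow_add]
        have : n - i + i = n := by omega
        rw [this]
        exact hn.neg_one_pow
      have key2 : (-1:ℝ)^i * (-1:ℝ)^i = 1 := by
        rw [← pow_add]
        have he : Even (i+i) := ⟨i, rfl⟩
        exact he.neg_one_pow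
      calc (-1:ℝ)^(n-i) = (-1:ℝ)^(n-i) * ((-1:ℝ)^i * (-1:ℝ)^i) := by rw [key2, mul_one]
        _ = ((-1:ℝ)^(n-i) * (-1:ℝ)^i) * (-1:ℝ)^i := by ring
        _ = (-1:ℝ)^i := by rw [key, one_mul]
    · rw [Nat.choose_symm hin]
  rw [Finset.sum_congr rfl h2] at h1
  have hrefl := Finset.sum_range_reflect
    (fun j => ((-1:ℝ)^(n-j) * (n.choose j)) * f ((0:ℝ) + (j:ℝ)*y)) (n+1)
  simp only [Nat.add_sub_cancel] at hrefl
  rw [hrefl] at h1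
  rw [← fdiff_iter_sum y f n 0, hD hm 0 y] at h1
  exact mul_left_cancel₀ hfact h1

lemma hom_rat (hm : IsMonomial n f) (hn : Even n) (q : ℚ) (y : ℝ) :
    f ((q:ℝ) * y) = (q:ℝ)^n * f y := by
  have hden : ((q.den : ℝ)) ≠ 0 := by
    have := q.pos
    positivity
  have hbase : ∀ a : ℕ, f ((a:ℝ)/(q.den:ℝ) * y) = ((a:ℝ)/(q.den:ℝ))^n * f y := by
    intro a
    have h1 : f ((a:ℝ) * (y/(q.den:ℝ))) = (a:ℝ)^n * f (y/(q.den:ℝ)) := hom_nat hm a _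
    have h2 : f ((q.den:ℝ) * (y/(q.den:ℝ))) = (q.den:ℝ)^n * f (y/(q.den:ℝ)) := hom_nat hm q.den _
    rw [mul_div_cancel₀ _ hden] at h2
    have h3 : f (y/(q.den:ℝ)) = f y / (q.den:ℝ)^n := by
      rw [eq_div_iff (pow_ne_zero _ hden)]
      linarith [h2]
    rw [show ((a:ℝ)/(q.den:ℝ) * y) = (a:ℝ) * (y/(q.den:ℝ)) by ring, h1, h3]
    ring
  rcases le_or_gt 0 q.num with hq | hq
  · have : ((q:ℝ)) = ((q.num.toNat : ℝ))/(q.den:ℝ) := by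
      rw [Rat.cast_def]
      congr 1
      exact_mod_cast (Int.toNat_of_nonneg hq).symm
    rw [this]
    exact hbase q.num.toNat
  · have : ((q:ℝ)) = -(((-q.num).toNat : ℝ))/(q.den:ℝ) := by
      rw [Rat.cast_def]
      congr 1
      have : (((-q.num).toNat : ℤ) : ℝ) = ((-q.num : ℤ) : ℝ) := by
        congr 1
        exact Int.toNat_of_nonneg (by omega)
      push_cast at this ⊢
      linarith [this]
    rw [this]
    rw [show (-(((-q.num).toNat : ℝ))/(q.den:ℝ) * y) = -((((-q.num).toNat : ℝ))/(q.den:ℝ) * y) by ring]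
    rw [neg_even hm hn, hbase]
    rw [show (-(((-q.num).toNat : ℝ))/(q.den:ℝ)) = -((((-q.num).toNat : ℝ))/(q.den:ℝ)) by ring]
    rw [Even.neg_pow hn]


lemma coeff_bound (n : ℕ) : ∃ B : ℝ, 1 ≤ B ∧ ∀ (P : ℝ[X]), P.natDegree ≤ n → ∀ M : ℝ,
    (∀ i : ℕ, i ≤ n → |P.eval (i:ℝ)| ≤ M) → ∀ k, |P.coeff k| ≤ B * M := by
  have hinj : Set.InjOn (fun i : ℕ => (i:ℝ)) (range (n+1)) :=
    fun a _ b _ hab => Nat.cast_injective hab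
  set B₀ : ℝ := ∑ j ∈ range (n+1), ∑ k ∈ range (n+1),
    |(Lagrange.basis (range (n+1)) (fun i : ℕ => (i:ℝ)) j).coeff k| with hB₀
  refine ⟨max B₀ 1, le_max_right _ _, ?_⟩
  intro P hd M hval k
  have hM0 : 0 ≤ M := le_trans (abs_nonneg _) (hval 0 (by omega))
  have hBM : 0 ≤ max B₀ 1 * M := mul_nonneg (le_trans zero_le_one (le_max_right _ _)) hM0
  by_cases hk : k ≤ n
  · have hrep : P = Lagrange.interpolate (range (n+1)) (fun i : ℕ => (i:ℝ))
        (fun i => P.eval ((i:ℕ):ℝ)) := by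
      refine Lagrange.eq_interpolate hinj ?_
      rw [Finset.card_range]
      refine lt_of_le_of_lt Polynomial.degree_le_natDegree ?_
      exact_mod_cast Nat.lt_succ_of_le hd
    have hco : P.coeff k = ∑ j ∈ range (n+1), P.eval ((j:ℕ):ℝ) *
        (Lagrange.basis (range (n+1)) (fun i : ℕ => (i:ℝ)) j).coeff k := by
      conv_lhs => rw [hrep]
      rw [Lagrange.interpolate_apply, Polynomial.finset_sum_coeff]
      refine Finset.sum_congr rfl fun j _ => ?_
      rw [Polynomial.coeff_C_mul]
    rw [hco]
    refine le_trans (Finset.abs_sum_le_sum_abs _ _) ?_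
    have hstep : ∀ j ∈ range (n+1), |P.eval ((j:ℕ):ℝ) *
        (Lagrange.basis (range (n+1)) (fun i : ℕ => (i:ℝ)) j).coeff k|
        ≤ M * |(Lagrange.basis (range (n+1)) (fun i : ℕ => (i:ℝ)) j).coeff k| := by
      intro j hj
      rw [abs_mul]
      have := hval j (by have := Finset.mem_range.mp hj; omega)
      exact mul_le_mul_of_nonneg_right this (abs_nonneg _)
    refine le_trans (Finset.sum_le_sum hstep) ?_
    rw [← Finset.mul_sum]
    have hsum : ∑ j ∈ range (n+1),
        |(Lagrange.basis (range (n+1)) (fun i : ℕ => (i:ℝ)) j).coeff k| ≤ B₀ := by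
      rw [hB₀]
      refine Finset.sum_le_sum fun j _ => ?_
      refine Finset.single_le_sum (f := fun k' =>
        |(Lagrange.basis (range (n+1)) (fun i : ℕ => (i:ℝ)) j).coeff k'|)
        (fun k' _ => abs_nonneg _) (Finset.mem_range.mpr (by omega))
    calc M * ∑ j ∈ range (n+1),
        |(Lagrange.basis (range (n+1)) (fun i : ℕ => (i:ℝ)) j).coeff k|
        ≤ M * B₀ := mul_le_mul_of_nonneg_left hsum hM0
      _ ≤ max B₀ 1 * M := by
          rw [mul_comm]
          exact mul_le_mul_of_nonneg_right (le_max_left _ _) hM0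
  · have : P.coeff k = 0 := Polynomial.coeff_eq_zero_of_natDegree_lt (by omega)
    rw [this]
    simpa using hBM

lemma global_bound (hm : IsMonomial n f) (hn : Even n) (δ₀ M : ℝ) (hδ : 0 < δ₀)
    (hb : ∀ w : ℝ, |w| ≤ δ₀ → |f w| ≤ M) :
    ∀ u : ℝ, |f u| ≤ M * (2*(|u|+δ₀)/δ₀)^n := by
  intro u
  have hpos : (0:ℝ) < (|u|+δ₀)/δ₀ := by positivity
  have hlt : (|u|+δ₀)/δ₀ < 2*(|u|+δ₀)/δ₀ := by
    rw [div_lt_div_iff₀ hδ hδ]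
    nlinarith [abs_nonneg u]
  obtain ⟨q, hq1, hq2⟩ := exists_rat_btwn hlt
  have hqpos : (0:ℝ) < (q:ℝ) := lt_trans hpos hq1
  have hqne : ((q:ℝ)) ≠ 0 := ne_of_gt hqpos
  have heq : f u = (q:ℝ)^n * f (u/(q:ℝ)) := by
    have := hom_rat hm hn q (u/(q:ℝ))
    rw [mul_div_cancel₀ _ hqne] at this
    exact this
  have hsmall : |u/(q:ℝ)| ≤ δ₀ := by
    rw [abs_div, abs_of_pos hqpos, div_le_iff₀ hqpos]
    have h2 : (|u|+δ₀)/δ₀ ≤ (q:ℝ) := le_of_lt hq1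
    rw [div_le_iff₀ hδ] at h2
    nlinarith [abs_nonneg u]
  have hM0 : 0 ≤ M := le_trans (abs_nonneg _) (hb 0 (by simpa using le_of_lt hδ))
  rw [heq, abs_mul, abs_pow, abs_of_pos hqpos]
  calc (q:ℝ)^n * |f (u/(q:ℝ))| ≤ (q:ℝ)^n * M :=
        mul_le_mul_of_nonneg_left (hb _ hsmall) (by positivity)
    _ ≤ (2*(|u|+δ₀)/δ₀)^n * M := by
        refine mul_le_mul_of_nonneg_right ?_ hM0
        exact pow_le_pow_left₀ (le_of_lt hqpos) (le_of_lt hq2) n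
    _ = M * (2*(|u|+δ₀)/δ₀)^n := by ring

lemma cont_of_bounded (hm : IsMonomial n f) (hn : Even n)
    (δ₀ M : ℝ) (hδ : 0 < δ₀) (hb : ∀ w : ℝ, |w| ≤ δ₀ → |f w| ≤ M) : Continuous f := by
  obtain ⟨B, hB1, hB⟩ := coeff_bound n
  have hg := global_bound hm hn δ₀ M hδ hb
  have hM0 : 0 ≤ M := le_trans (abs_nonneg _) (hb 0 (by simpa using le_of_lt hδ))
  rw [continuous_iff_continuousAt]
  intro x
  set Kx : ℝ := M * (2*((|x|+n)+δ₀)/δ₀)^n with hKx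
  have hKx0 : 0 ≤ Kx := by positivity
  have hKmono : ∀ u : ℝ, |u| ≤ |x| + n → |f u| ≤ Kx := by
    intro u hu
    refine le_trans (hg u) ?_
    rw [hKx]
    refine mul_le_mul_of_nonneg_left ?_ hM0
    refine pow_le_pow_left₀ (by positivity) ?_ n
    have : (0:ℝ) < δ₀ := hδ
    rw [div_le_div_iff₀ hδ hδ]
    nlinarith
  set C : ℝ := (n:ℝ) * B * Kx * 2 + 1 with hC
  have hC1 : (1:ℝ) ≤ C := by
    have : (0:ℝ) ≤ (n:ℝ) * B * Kx * 2 := by positivity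
    linarith
  have hC0 : (0:ℝ) < C := by linarith
  -- main estimate
  have main : ∀ t : ℝ, t ≠ 0 → |t| ≤ 1/4 → |f (x + t) - f x| ≤ (C-1) * Real.sqrt |t| := by
    intro t ht0 ht
    have habs0 : (0:ℝ) < |t| := abs_pos.mpr ht0
    have hs0 : (0:ℝ) < Real.sqrt |t| := Real.sqrt_pos.mpr habs0
    have hs12 : Real.sqrt |t| ≤ 1/2 := by
      rw [show (1/2 : ℝ) = Real.sqrt (1/4) by
        rw [show (1/4 : ℝ) = (1/2)^2 by norm_num, Real.sqrt_sq (by norm_num)]]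
      exact Real.sqrt_le_sqrt ht
    obtain ⟨q, hq1, hq2⟩ := exists_rat_btwn (by linarith : Real.sqrt |t| < 2 * Real.sqrt |t|)
    have hqpos : (0:ℝ) < (q:ℝ) := lt_trans hs0 hq1
    have hq1' : ((q:ℝ)) ≤ 1 := by linarith
    set y : ℝ := t / (q:ℝ) with hy
    have hyb : |y| ≤ 1 := by
      rw [hy, abs_div, abs_of_pos hqpos, div_le_one hqpos]
      calc |t| = Real.sqrt |t| * Real.sqrt |t| := (Real.mul_self_sqrt (le_of_lt habs0)).symm
        _ ≤ Real.sqrt |t| * 1 := by nlinarith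
        _ ≤ (q:ℝ) := by linarith
    obtain ⟨P, hd, key, hev0, -⟩ := exists_poly hm x y
    have hxt : f (x + t) = P.eval (q:ℝ) := by
      have := key q
      rw [hy, mul_div_cancel₀ _ (ne_of_gt hqpos)] at this
      exact this
    have hvals : ∀ i : ℕ, i ≤ n → |P.eval ((i:ℕ):ℝ)| ≤ Kx := by
      intro i hi
      have hkey := key (i : ℚ)
      push_cast at hkey
      rw [← hkey]
      refine hKmono _ ?_
      calc |x + (i:ℝ)*y| ≤ |x| + |(i:ℝ)*y| := abs_add_le _ _
        _ ≤ |x| + n := by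
            rw [abs_mul]
            have h1 : |(i:ℝ)| ≤ (n:ℝ) := by
              rw [abs_of_nonneg (by positivity : (0:ℝ) ≤ (i:ℝ))]
              exact_mod_cast hi
            nlinarith [abs_nonneg y, abs_nonneg (i:ℝ)]
    have hcoeffs : ∀ k, |P.coeff k| ≤ B * Kx := fun k => hB P hd Kx hvals k
    have hsum : P.eval (q:ℝ) = ∑ i ∈ range (n+1), P.coeff i * (q:ℝ)^i :=
      Polynomial.eval_eq_sum_range' (Nat.lt_succ_of_le hd) _
    have hdiff : f (x + t) - f x = ∑ i ∈ range n, P.coeff (i+1) * (q:ℝ)^(i+1) := by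
      rw [hxt, ← hev0, hsum]
      have hsum0 : P.eval 0 = P.coeff 0 := by
        rw [Polynomial.eval_eq_sum_range' (Nat.lt_succ_of_le hd) (0:ℝ)]
        rw [Finset.sum_range_succ']
        simp
      rw [hsum0, Finset.sum_range_succ']
      simp
    rw [hdiff]
    refine le_trans (Finset.abs_sum_le_sum_abs _ _) ?_
    have hterm : ∀ i ∈ range n, |P.coeff (i+1) * (q:ℝ)^(i+1)| ≤ B * Kx * (q:ℝ) := by
      intro i _
      rw [abs_mul]
      have h1 : |(q:ℝ)^(i+1)| ≤ (q:ℝ) := by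
        rw [abs_of_pos (by positivity)]
        calc (q:ℝ)^(i+1) ≤ (q:ℝ)^1 := by
              refine pow_le_pow_of_le_one (le_of_lt hqpos) hq1' ?_
              omega
          _ = (q:ℝ) := pow_one _
      have h2 : (0:ℝ) ≤ B * Kx := by positivity
      calc |P.coeff (i+1)| * |(q:ℝ)^(i+1)| ≤ (B * Kx) * |(q:ℝ)^(i+1)| :=
            mul_le_mul_of_nonneg_right (hcoeffs _) (abs_nonneg _)
        _ ≤ (B * Kx) * (q:ℝ) := mul_le_mul_of_nonneg_left h1 h2
    refine le_trans (Finset.sum_le_sum hterm) ?_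
    rw [Finset.sum_const, Finset.card_range, nsmul_eq_mul]
    calc (n:ℝ) * (B * Kx * (q:ℝ)) ≤ (n:ℝ) * (B * Kx * (2 * Real.sqrt |t|)) := by
          refine mul_le_mul_of_nonneg_left ?_ (by positivity)
          refine mul_le_mul_of_nonneg_left (le_of_lt hq2) (by positivity)
      _ = (C - 1) * Real.sqrt |t| := by rw [hC]; ring
  -- conclude continuity at x
  rw [Metric.continuousAt_iff]
  intro ε hε
  refine ⟨min (1/4) ((ε/C)^2), by positivity, ?_⟩
  intro t' hdist
  rw [Real.dist_eq] at hdist ⊢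
  set t : ℝ := t' - x with htdef
  have ht4 : |t| ≤ 1/4 := le_of_lt (lt_of_lt_of_le hdist (min_le_left _ _))
  have htsq : |t| < (ε/C)^2 := lt_of_lt_of_le hdist (min_le_right _ _)
  by_cases ht0 : t = 0
  · have : t' = x := by rw [htdef] at ht0; linarith [sub_eq_zero.mp ht0]
    rw [this]
    simpa using hε
  · have h1 := main t ht0 ht4
    have h2 : Real.sqrt |t| < ε/C := by
      have := Real.sqrt_lt_sqrt (abs_nonneg t) htsq
      rwa [Real.sqrt_sq (by positivity)] at this
    have h3 : (C-1) * Real.sqrt |t| < ε := by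
      have hC1' : (0:ℝ) ≤ C - 1 := by linarith
      calc (C-1) * Real.sqrt |t| ≤ (C-1) * (ε/C) := by
            rcases eq_or_lt_of_le hC1' with h | h
            · rw [← h]; simp
            · exact mul_le_mul_of_nonneg_left (le_of_lt h2) hC1'
        _ < ε := by
            rw [div_eq_mul_inv]
            have : (C-1) * (ε * C⁻¹) = ε * ((C-1)/C) := by field_simp
            rw [this]
            have hfrac : (C-1)/C < 1 := by
              rw [div_lt_one hC0]; linarith
            nlinarith [hε]
    have : f t' = f (x + t) := by rw [htdef]; ring_nf
    rw [this]
    calc |f (x+t) - f x| ≤ (C-1) * Real.sqrt |t| := h1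
      _ < ε := h3


lemma wild_path (hm : IsMonomial n f)
    (hwild : ∀ δ M : ℝ, 0 < δ → ∃ w, |w| ≤ δ ∧ M < |f w|) :
    ∀ x δ M : ℝ, 0 < δ → ∃ (w : ℝ) (j : ℕ), 1 ≤ j ∧ j ≤ n ∧
      ((n:ℝ)+1) * |w| < δ ∧ M < |f (x + (j:ℝ)*w)| := by
  obtain ⟨B, hB1, hB⟩ := coeff_bound n
  intro x δ M hδ
  set M' : ℝ := max M |f x| + 1 with hM'
  have hM'pos : 0 < M' := by
    have := le_max_right M |f x|
    have := abs_nonneg (f x)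
    linarith
  obtain ⟨w, hw1, hw2⟩ := hwild (δ/(2*((n:ℝ)+1))) (B*M') (by positivity)
  obtain ⟨P, hd, key, hev0, hcoeff⟩ := exists_poly hm x w
  have hbig : ∃ i : ℕ, i ≤ n ∧ M' < |f (x + (i:ℝ)*w)| := by
    by_contra hcon
    push_neg at hcon
    have hvals : ∀ i : ℕ, i ≤ n → |P.eval ((i:ℕ):ℝ)| ≤ M' := by
      intro i hi
      have hkey := key (i:ℚ)
      push_cast at hkey
      rw [← hkey]
      exact hcon i hi
    have := hB P hd M' hvals n
    rw [hcoeff] at this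
    linarith [hw2]
  obtain ⟨i, hi, hibig⟩ := hbig
  have hi1 : 1 ≤ i := by
    by_contra hi0
    push_neg at hi0
    interval_cases i
    simp only [Nat.cast_zero, zero_mul, add_zero] at hibig
    have := le_max_right M |f x|
    have := abs_nonneg (f x)
    have h1 : |f x| < M' := by
      rw [hM']
      have := le_max_right M |f x|
      linarith
    linarith
  refine ⟨w, i, hi1, hi, ?_, ?_⟩
  · calc ((n:ℝ)+1) * |w| ≤ ((n:ℝ)+1) * (δ/(2*((n:ℝ)+1))) :=
        mul_le_mul_of_nonneg_left hw1 (by positivity)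
      _ < δ := by
        rw [mul_div_assoc']
        rw [div_lt_iff₀ (by positivity : (0:ℝ) < 2*((n:ℝ)+1))]
        nlinarith
  · have : M < M' := by
      have := le_max_left M |f x|
      linarith
    linarith

lemma h_plus_up (hm : IsMonomial n f) (x : ℝ)
    (hplus : ∀ δ M : ℝ, 0 < δ → ∃ (w : ℝ) (j : ℕ), 1 ≤ j ∧ j ≤ n ∧
      ((n:ℝ)+1) * |w| < δ ∧ M < f (x + (j:ℝ)*w)) : Up f x := by
  intro δ ε T hδ hε hT
  obtain ⟨w, j, hj1, hjn, hwδ, hbig⟩ := hplus δ T hδ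
  obtain ⟨P, hd, key, hev0, -⟩ := exists_poly hm x w
  have hPj : P.eval ((j:ℕ):ℝ) = f (x + (j:ℝ)*w) := by
    have hkey := key (j:ℚ)
    push_cast at hkey
    rw [hkey]
  have hmem : T ∈ Set.Icc (P.eval 0) (P.eval ((j:ℕ):ℝ)) := by
    constructor
    · rw [hev0]; exact hT
    · rw [hPj]; exact le_of_lt hbig
  have hivt := intermediate_value_Icc (by positivity : (0:ℝ) ≤ ((j:ℕ):ℝ))
    ((P.continuous).continuousOn (s := Set.Icc 0 ((j:ℕ):ℝ)))
  obtain ⟨ξ, hξmem, hξval⟩ := hivt hmem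
  have hcont := (P.continuous).continuousAt (x := ξ)
  rw [Metric.continuousAt_iff] at hcont
  obtain ⟨δ₂, hδ₂, hδ₂p⟩ := hcont ε hε
  obtain ⟨q, hq1, hq2⟩ := exists_rat_btwn
    (by linarith [lt_min hδ₂ (by norm_num : (0:ℝ) < 1)] : ξ < ξ + min δ₂ 1)
  have hqξ : |(q:ℝ) - ξ| < δ₂ := by
    rw [abs_of_pos (by linarith)]
    have := min_le_left δ₂ (1:ℝ)
    linarith
  have hfu : f (x + (q:ℝ)*w) = P.eval (q:ℝ) := key q
  refine ⟨x + (q:ℝ)*w, ?_, ?_⟩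
  · rw [add_sub_cancel_left, abs_mul]
    have hq0 : (0:ℝ) ≤ (q:ℝ) := le_trans hξmem.1 (le_of_lt hq1)
    have hqub : (q:ℝ) ≤ (n:ℝ) + 1 := by
      have h1 : ξ ≤ ((j:ℕ):ℝ) := hξmem.2
      have h2 : ((j:ℕ):ℝ) ≤ (n:ℝ) := by exact_mod_cast hjn
      have := min_le_right δ₂ (1:ℝ)
      linarith
    calc |(q:ℝ)| * |w| ≤ ((n:ℝ)+1) * |w| := by
          rw [abs_of_nonneg hq0]
          exact mul_le_mul_of_nonneg_right hqub (abs_nonneg _)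
      _ < δ := hwδ
  · rw [hfu, ← hξval]
    have := hδ₂p (x := (q:ℝ)) (by rw [Real.dist_eq]; exact hqξ)
    rw [Real.dist_eq] at this
    exact this

lemma h_minus_down (hm : IsMonomial n f) (x : ℝ)
    (hminus : ∀ δ M : ℝ, 0 < δ → ∃ (w : ℝ) (j : ℕ), 1 ≤ j ∧ j ≤ n ∧
      ((n:ℝ)+1) * |w| < δ ∧ f (x + (j:ℝ)*w) < M) : Down f x := by
  intro δ ε T hδ hε hT
  obtain ⟨w, j, hj1, hjn, hwδ, hbig⟩ := hminus δ T hδ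
  obtain ⟨P, hd, key, hev0, -⟩ := exists_poly hm x w
  have hPj : P.eval ((j:ℕ):ℝ) = f (x + (j:ℝ)*w) := by
    have hkey := key (j:ℚ)
    push_cast at hkey
    rw [hkey]
  have hmem : T ∈ Set.Icc (P.eval ((j:ℕ):ℝ)) (P.eval 0) := by
    constructor
    · rw [hPj]; exact le_of_lt hbig
    · rw [hev0]; exact hT
  have hivt := intermediate_value_Icc' (by positivity : (0:ℝ) ≤ ((j:ℕ):ℝ))
    ((P.continuous).continuousOn (s := Set.Icc 0 ((j:ℕ):ℝ)))
  obtain ⟨ξ, hξmem, hξval⟩ := hivt hmem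
  have hcont := (P.continuous).continuousAt (x := ξ)
  rw [Metric.continuousAt_iff] at hcont
  obtain ⟨δ₂, hδ₂, hδ₂p⟩ := hcont ε hε
  obtain ⟨q, hq1, hq2⟩ := exists_rat_btwn
    (by linarith [lt_min hδ₂ (by norm_num : (0:ℝ) < 1)] : ξ < ξ + min δ₂ 1)
  have hqξ : |(q:ℝ) - ξ| < δ₂ := by
    rw [abs_of_pos (by linarith)]
    have := min_le_left δ₂ (1:ℝ)
    linarith
  have hfu : f (x + (q:ℝ)*w) = P.eval (q:ℝ) := key q
  refine ⟨x + (q:ℝ)*w, ?_, ?_⟩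
  · rw [add_sub_cancel_left, abs_mul]
    have hq0 : (0:ℝ) ≤ (q:ℝ) := le_trans hξmem.1 (le_of_lt hq1)
    have hqub : (q:ℝ) ≤ (n:ℝ) + 1 := by
      have h1 : ξ ≤ ((j:ℕ):ℝ) := hξmem.2
      have h2 : ((j:ℕ):ℝ) ≤ (n:ℝ) := by exact_mod_cast hjn
      have := min_le_right δ₂ (1:ℝ)
      linarith
    calc |(q:ℝ)| * |w| ≤ ((n:ℝ)+1) * |w| := by
          rw [abs_of_nonneg hq0]
          exact mul_le_mul_of_nonneg_right hqub (abs_nonneg _)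
      _ < δ := hwδ
  · rw [hfu, ← hξval]
    have := hδ₂p (x := (q:ℝ)) (by rw [Real.dist_eq]; exact hqξ)
    rw [Real.dist_eq] at this
    exact this

lemma up_or_down (hm : IsMonomial n f)
    (hwild : ∀ δ M : ℝ, 0 < δ → ∃ w, |w| ≤ δ ∧ M < |f w|) (x : ℝ) :
    Up f x ∨ Down f x := by
  by_cases hplus : ∀ δ M : ℝ, 0 < δ → ∃ (w : ℝ) (j : ℕ), 1 ≤ j ∧ j ≤ n ∧
      ((n:ℝ)+1) * |w| < δ ∧ M < f (x + (j:ℝ)*w)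
  · exact Or.inl (h_plus_up hm x hplus)
  · push_neg at hplus
    obtain ⟨δ₁, M₁, hδ₁, hbd⟩ := hplus
    right
    refine h_minus_down hm x ?_
    intro δ M hδ
    obtain ⟨w, j, hj1, hjn, hwδ, hbig⟩ := wild_path hm hwild x (min δ δ₁)
      (max M₁ (max M (-M)) + 1) (lt_min hδ hδ₁)
    have hwδ' : ((n:ℝ)+1) * |w| < δ := lt_of_lt_of_le hwδ (min_le_left _ _)
    have hwδ₁ : ((n:ℝ)+1) * |w| < δ₁ := lt_of_lt_of_le hwδ (min_le_right _ _)
    have hub := hbd w j hj1 hjn hwδ₁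
    refine ⟨w, j, hj1, hjn, hwδ', ?_⟩
    rcases lt_abs.mp hbig with h | h
    · exfalso
      have h1 := le_max_left M₁ (max M (-M))
      linarith
    · have h1 := le_max_right M₁ (max M (-M))
      have h2 := le_max_right M (-M)
      linarith


lemma up_scale (hm : IsMonomial n f) (hn : Even n) {q : ℚ} (hq : (q:ℝ) ≠ 0) {x : ℝ}
    (h : Up f x) : Up f ((q:ℝ)*x) := by
  intro δ ε T hδ hε hT
  have hqn : (0:ℝ) < (q:ℝ)^n := hn.pow_pos hq
  have hfx : f ((q:ℝ)*x) = (q:ℝ)^n * f x := hom_rat hm hn q x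
  have hT' : f x ≤ T / (q:ℝ)^n := by
    rw [le_div_iff₀ hqn]
    rw [hfx] at hT
    linarith [hT]
  obtain ⟨u, hu1, hu2⟩ := h (δ/|(q:ℝ)|) (ε/(q:ℝ)^n) (T/(q:ℝ)^n)
    (by positivity) (by positivity) hT'
  refine ⟨(q:ℝ)*u, ?_, ?_⟩
  · rw [show (q:ℝ)*u - (q:ℝ)*x = (q:ℝ)*(u-x) by ring, abs_mul]
    rw [lt_div_iff₀ (abs_pos.mpr hq)] at hu1
    linarith [hu1]
  · rw [hom_rat hm hn q u]
    have he : (q:ℝ)^n * f u - T = (q:ℝ)^n * (f u - T/(q:ℝ)^n) := by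
      field_simp
    rw [he, abs_mul, abs_of_pos hqn]
    calc (q:ℝ)^n * |f u - T/(q:ℝ)^n| < (q:ℝ)^n * (ε/(q:ℝ)^n) :=
          mul_lt_mul_of_pos_left hu2 hqn
      _ = ε := by field_simp

lemma down_scale (hm : IsMonomial n f) (hn : Even n) {q : ℚ} (hq : (q:ℝ) ≠ 0) {x : ℝ}
    (h : Down f x) : Down f ((q:ℝ)*x) := by
  intro δ ε T hδ hε hT
  have hqn : (0:ℝ) < (q:ℝ)^n := hn.pow_pos hq
  have hfx : f ((q:ℝ)*x) = (q:ℝ)^n * f x := hom_rat hm hn q x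
  have hT' : T / (q:ℝ)^n ≤ f x := by
    rw [div_le_iff₀ hqn]
    rw [hfx] at hT
    linarith [hT]
  obtain ⟨u, hu1, hu2⟩ := h (δ/|(q:ℝ)|) (ε/(q:ℝ)^n) (T/(q:ℝ)^n)
    (by positivity) (by positivity) hT'
  refine ⟨(q:ℝ)*u, ?_, ?_⟩
  · rw [show (q:ℝ)*u - (q:ℝ)*x = (q:ℝ)*(u-x) by ring, abs_mul]
    rw [lt_div_iff₀ (abs_pos.mpr hq)] at hu1
    linarith [hu1]
  · rw [hom_rat hm hn q u]
    have he : (q:ℝ)^n * f u - T = (q:ℝ)^n * (f u - T/(q:ℝ)^n) := by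
      field_simp
    rw [he, abs_mul, abs_of_pos hqn]
    calc (q:ℝ)^n * |f u - T/(q:ℝ)^n| < (q:ℝ)^n * (ε/(q:ℝ)^n) :=
          mul_lt_mul_of_pos_left hu2 hqn
      _ = ε := by field_simp


end Mono

lemma near_ne_zero (a ε : ℝ) (hε : 0 < ε) : ∃ p : ℝ, p ≠ 0 ∧ |p - a| < ε := by
  by_cases ha : a = 0
  · exact ⟨ε/2, by positivity, by rw [ha]; rw [sub_zero, abs_of_pos (by positivity)]; linarith⟩
  · exact ⟨a, ha, by simpa using hε⟩

lemma rat_rescale (p z : ℝ) (hp : p ≠ 0) (hz : z ≠ 0) (ε : ℝ) (hε : 0 < ε) :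
    ∃ q : ℚ, (q:ℝ) ≠ 0 ∧ |(q:ℝ)*p - z| < ε := by
  have hap : (0:ℝ) < |p| := abs_pos.mpr hp
  have haz : (0:ℝ) < |z| := abs_pos.mpr hz
  set r : ℝ := min ε |z| / |p| with hr
  have hr0 : 0 < r := by positivity
  obtain ⟨q, hq1, hq2⟩ := exists_rat_btwn (by linarith : z/p < z/p + r)
  have hqz : |(q:ℝ) - z/p| < r := by
    rw [abs_of_pos (by linarith)]
    linarith
  have key : |(q:ℝ)*p - z| < min ε |z| := by
    have : (q:ℝ)*p - z = ((q:ℝ) - z/p) * p := by field_simp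
    rw [this, abs_mul]
    calc |(q:ℝ) - z/p| * |p| < r * |p| := mul_lt_mul_of_pos_right hqz hap
      _ = min ε |z| := by rw [hr]; field_simp
  refine ⟨q, ?_, lt_of_lt_of_le key (min_le_left _ _)⟩
  intro hq0
  rw [hq0, zero_mul, zero_sub, abs_neg] at key
  have := lt_of_lt_of_le key (min_le_right _ _)
  linarith

theorem stmt17 (n : ℕ) (hn : Even n) (f : ℝ → ℝ) (hf : IsMonomial n f)
    (hdisc : ¬ Continuous f) :
    Dense {q : ℝ × ℝ × ℝ | q.2.2 = f (q.1 + q.2.1) - f q.1} := by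
  rcases Nat.eq_zero_or_pos n with hn0 | hn1
  · exfalso
    apply hdisc
    have hc : ∀ x : ℝ, f x = f 0 := by
      intro x
      have h1 := hf x 0
      rw [hn0] at h1
      simpa using h1
    have hcf : f = fun _ => f 0 := funext hc
    rw [hcf]
    exact continuous_const
  have hwild : ∀ δ M : ℝ, 0 < δ → ∃ w, |w| ≤ δ ∧ M < |f w| := by
    intro δ M hδ
    by_contra hcon
    push_neg at hcon
    exact hdisc (cont_of_bounded hf hn δ M hδ hcon)
  rw [Metric.dense_iff]
  rintro ⟨a, bc⟩ r hr
  obtain ⟨b, c⟩ := bc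
  have main : ∃ u v : ℝ, |u - a| < r/2 ∧ |v - (a+b)| < r/2 ∧ |f v - f u - c| < r/2 := by
    obtain ⟨p₁0, hp₁ne, hp₁d⟩ := near_ne_zero a (r/8) (by positivity)
    obtain ⟨p₂0, hp₂ne, hp₂d⟩ := near_ne_zero (a+b) (r/8) (by positivity)
    have pair : ((∃ p, p ≠ 0 ∧ |p - a| < r/4 ∧ Up f p) ∧
          (∃ p, p ≠ 0 ∧ |p - (a+b)| < r/4 ∧ Up f p))
        ∨ ((∃ p, p ≠ 0 ∧ |p - a| < r/4 ∧ Down f p) ∧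
          (∃ p, p ≠ 0 ∧ |p - (a+b)| < r/4 ∧ Down f p)) := by
      by_cases hU1 : ∃ p, p ≠ 0 ∧ |p - a| < r/4 ∧ Up f p
      · by_cases hU2 : ∃ p, p ≠ 0 ∧ |p - (a+b)| < r/4 ∧ Up f p
        · exact Or.inl ⟨hU1, hU2⟩
        · push_neg at hU2
          have hD2 : Down f p₂0 := by
            rcases up_or_down hf hwild p₂0 with h | h
            · exact absurd h (hU2 p₂0 hp₂ne (by linarith))
            · exact h
          right
          constructor
          · obtain ⟨z, hzne, hzd⟩ := near_ne_zero a (r/8) (by positivity)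
            obtain ⟨q, hq0, hqd⟩ := rat_rescale p₂0 z hp₂ne hzne (r/8) (by positivity)
            refine ⟨(q:ℝ)*p₂0, mul_ne_zero hq0 hp₂ne, ?_, down_scale hf hn hq0 hD2⟩
            calc |(q:ℝ)*p₂0 - a| ≤ |(q:ℝ)*p₂0 - z| + |z - a| := by
                  have he : (q:ℝ)*p₂0 - a = ((q:ℝ)*p₂0 - z) + (z - a) := by ring
                  rw [he]; exact abs_add_le _ _
              _ < r/4 := by linarith
          · exact ⟨p₂0, hp₂ne, by linarith, hD2⟩
      · push_neg at hU1
        have hD1 : Down f p₁0 := by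
          rcases up_or_down hf hwild p₁0 with h | h
          · exact absurd h (hU1 p₁0 hp₁ne (by linarith))
          · exact h
        right
        constructor
        · exact ⟨p₁0, hp₁ne, by linarith, hD1⟩
        · obtain ⟨z, hzne, hzd⟩ := near_ne_zero (a+b) (r/8) (by positivity)
          obtain ⟨q, hq0, hqd⟩ := rat_rescale p₁0 z hp₁ne hzne (r/8) (by positivity)
          refine ⟨(q:ℝ)*p₁0, mul_ne_zero hq0 hp₁ne, ?_, down_scale hf hn hq0 hD1⟩
          calc |(q:ℝ)*p₁0 - (a+b)| ≤ |(q:ℝ)*p₁0 - z| + |z - (a+b)| := by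
                have he : (q:ℝ)*p₁0 - (a+b) = ((q:ℝ)*p₁0 - z) + (z - (a+b)) := by ring
                rw [he]; exact abs_add_le _ _
            _ < r/4 := by linarith
    rcases pair with ⟨⟨p₁, hp₁, hp₁a, hup₁⟩, ⟨p₂, hp₂, hp₂a, hup₂⟩⟩ |
      ⟨⟨p₁, hp₁, hp₁a, hdn₁⟩, ⟨p₂, hp₂, hp₂a, hdn₂⟩⟩
    · set Tu : ℝ := max (f p₁) (f p₂ - c) + 1 with hTu
      obtain ⟨u, hu1, hu2⟩ := hup₁ (r/4) (min (r/4) (1/2)) Tu (by positivity)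
        (by positivity) (by have := le_max_left (f p₁) (f p₂ - c); linarith)
      have hfu : f p₂ ≤ f u + c := by
        have h1 : |f u - Tu| < 1/2 := lt_of_lt_of_le hu2 (min_le_right _ _)
        have h2 := le_max_right (f p₁) (f p₂ - c)
        have h3 := (abs_lt.mp h1).1
        linarith
      obtain ⟨v, hv1, hv2⟩ := hup₂ (r/4) (r/4) (f u + c) (by positivity) (by positivity) hfu
      have hu2' : |u - a| < r/2 := by
        calc |u - a| ≤ |u - p₁| + |p₁ - a| := by
              have he : u - a = (u - p₁) + (p₁ - a) := by ring
              rw [he]; exact abs_add_le _ _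
          _ < r/2 := by
              have := lt_of_lt_of_le hu1 (le_refl _)
              linarith
      have hv2' : |v - (a+b)| < r/2 := by
        calc |v - (a+b)| ≤ |v - p₂| + |p₂ - (a+b)| := by
              have he : v - (a+b) = (v - p₂) + (p₂ - (a+b)) := by ring
              rw [he]; exact abs_add_le _ _
          _ < r/2 := by linarith
      refine ⟨u, v, hu2', hv2', ?_⟩
      have he : f v - f u - c = f v - (f u + c) := by ring
      rw [he]
      linarith
    · set Tu : ℝ := min (f p₁) (f p₂ - c) - 1 with hTu
      obtain ⟨u, hu1, hu2⟩ := hdn₁ (r/4) (min (r/4) (1/2)) Tu (by positivity)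
        (by positivity) (by have := min_le_left (f p₁) (f p₂ - c); linarith)
      have hfu : f u + c ≤ f p₂ := by
        have h1 : |f u - Tu| < 1/2 := lt_of_lt_of_le hu2 (min_le_right _ _)
        have h2 := min_le_right (f p₁) (f p₂ - c)
        have h3 := (abs_lt.mp h1).2
        linarith
      obtain ⟨v, hv1, hv2⟩ := hdn₂ (r/4) (r/4) (f u + c) (by positivity) (by positivity) hfu
      have hu2' : |u - a| < r/2 := by
        calc |u - a| ≤ |u - p₁| + |p₁ - a| := by
              have he : u - a = (u - p₁) + (p₁ - a) := by ring
              rw [he]; exact abs_add_le _ _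
          _ < r/2 := by linarith
      have hv2' : |v - (a+b)| < r/2 := by
        calc |v - (a+b)| ≤ |v - p₂| + |p₂ - (a+b)| := by
              have he : v - (a+b) = (v - p₂) + (p₂ - (a+b)) := by ring
              rw [he]; exact abs_add_le _ _
          _ < r/2 := by linarith
      refine ⟨u, v, hu2', hv2', ?_⟩
      have he : f v - f u - c = f v - (f u + c) := by ring
      rw [he]
      linarith
  obtain ⟨u, v, h1, h2, h3⟩ := main
  refine ⟨(u, v - u, f (u + (v - u)) - f u), ?_, rfl⟩
  rw [Metric.mem_ball]
  have hv : u + (v - u) = v := by ring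
  rw [Prod.dist_eq, Prod.dist_eq]
  simp only [Real.dist_eq]
  rw [hv]
  refine max_lt (by linarith) (max_lt ?_ ?_)
  · have he : (v - u) - b = (v - (a+b)) - (u - a) := by ring
    rw [he]
    calc |(v - (a+b)) - (u - a)| ≤ |v - (a+b)| + |u - a| := abs_sub _ _
      _ < r := by linarith
  · linarith [h3, abs_nonneg (f v - f u - c)]
end

section
/- Darboux-type theorem: if f : ℝ → ℝ satisfies Δ_h^{N+1} f(x) = 0 for all x, h ∈ ℝ and f is bounded on some nonempty open interval (a,b), then f is an ordinary polynomial, f(x) = a₀ + a₁ x + ⋯ + a_N x^N. -/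
open Finset Polynomial Filter


/-- discrete forward difference on sequences -/
def dseq (v : ℕ → ℝ) : ℕ → ℝ := fun n => v (n+1) - v n

theorem newton (n : ℕ) : ∀ v : ℕ → ℝ,
    v n = ∑ k ∈ range (n+1), (n.choose k : ℝ) * (dseq^[k] v) 0 := by
  induction n with
  | zero => intro v; simp
  | succ n ih =>
    intro v
    have key : ∑ k ∈ range (n+2), ((n+1).choose k : ℝ) * (dseq^[k] v) 0
        = (∑ k ∈ range (n+2), (n.choose k : ℝ) * (dseq^[k] v) 0)
          + ∑ k ∈ range (n+1), (n.choose k : ℝ) * (dseq^[k] (dseq v)) 0 := by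
      rw [Finset.sum_range_succ' _ (n+1), Finset.sum_range_succ' (fun k => (n.choose k : ℝ) * (dseq^[k] v) 0) (n+1)]
      have h2 : ∀ k, ((n+1).choose (k+1) : ℝ) = (n.choose (k+1) : ℝ) + (n.choose k : ℝ) := by
        intro k; rw [Nat.choose_succ_succ]; push_cast; ring
      simp only [h2, add_mul, Finset.sum_add_distrib]
      have h3 : ∀ k, (dseq^[k+1] v) 0 = (dseq^[k] (dseq v)) 0 := by
        intro k; rw [Function.iterate_succ_apply]
      simp only [h3, Nat.choose_zero_right]
      ring
    have hlast : ((n.choose (n+1) : ℝ)) * (dseq^[n+1] v) 0 = 0 := by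
      simp [Nat.choose_eq_zero_of_lt (Nat.lt_succ_self n)]
    rw [key, Finset.sum_range_succ, hlast, add_zero, ← ih v, ← ih (dseq v)]
    show v (n+1) = v n + dseq v n
    simp [dseq]



lemma fdiff_comm (h h' : ℝ) (g : ℝ → ℝ) : fdiff h (fdiff h' g) = fdiff h' (fdiff h g) := by
  funext x; simp [fdiff]; ring_nf

lemma fdiff_zero (h : ℝ) : fdiff h (fun _ => (0:ℝ)) = fun _ => (0:ℝ) := by
  funext x; simp [fdiff]

lemma fdiff_iter_zero (h : ℝ) (j : ℕ) : (fdiff h)^[j] (fun _ => (0:ℝ)) = fun _ => (0:ℝ) := by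
  induction j with
  | zero => rfl
  | succ j ih => rw [Function.iterate_succ_apply, fdiff_zero, ih]

lemma dseq_iter (h : ℝ) (j : ℕ) : ∀ (g : ℝ → ℝ) (y : ℝ),
    dseq^[j] (fun m : ℕ => g (y + m*h)) = fun m : ℕ => ((fdiff h)^[j] g) (y + m*h) := by
  induction j with
  | zero => intro g y; rfl
  | succ j ih =>
    intro g y
    rw [Function.iterate_succ_apply]
    have : dseq (fun m : ℕ => g (y + m*h)) = fun m : ℕ => (fdiff h g) (y + m*h) := by
      funext m; simp [dseq, fdiff]; ring_nf
    rw [this, ih (fdiff h g) y, Function.iterate_succ_apply]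

lemma sum_trunc (c w : ℕ → ℝ) (m N : ℕ) (hc : ∀ j, m < j → c j = 0)
    (hw : ∀ j, N < j → w j = 0) :
    ∑ j ∈ range (m+1), c j * w j = ∑ j ∈ range (N+1), c j * w j := by
  have h1 : ∑ j ∈ range (m+1), c j * w j = ∑ j ∈ range (m+N+2), c j * w j := by
    apply Finset.sum_subset
    · exact Finset.range_subset_range.2 (by omega)
    · intro j _ hj
      rw [Finset.mem_range, not_lt] at hj
      rw [hc j (by omega), zero_mul]
  have h2 : ∑ j ∈ range (N+1), c j * w j = ∑ j ∈ range (m+N+2), c j * w j := by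
    apply Finset.sum_subset
    · exact Finset.range_subset_range.2 (by omega)
    · intro j _ hj
      rw [Finset.mem_range, not_lt] at hj
      rw [hw j (by omega), mul_zero]
  rw [h1, ← h2]

section Grid
variable (N : ℕ) (f : ℝ → ℝ) (hf : ∀ x h : ℝ, ((fdiff h)^[N + 1] f) x = 0)

include hf in
lemma fdiff_iter_vanish (h : ℝ) (j : ℕ) (hj : N < j) : (fdiff h)^[j] f = fun _ => (0:ℝ) := by
  have : j = (j - (N+1)) + (N+1) := by omega
  rw [this, Function.iterate_add_apply]
  have h0 : (fdiff h)^[N+1] f = fun _ => (0:ℝ) := funext (fun x => hf x h)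
  rw [h0, fdiff_iter_zero]

include hf in
lemma fdiff_iter_mixed_vanish (h1 h2 : ℝ) (j k : ℕ) (hk : N < k) :
    (fdiff h2)^[k] ((fdiff h1)^[j] f) = fun _ => (0:ℝ) := by
  have hc : Function.Commute (fdiff h1) (fdiff h2) := fdiff_comm h1 h2
  have hcc : Function.Commute ((fdiff h2)^[k]) ((fdiff h1)^[j]) :=
    (hc.symm.iterate_left k).iterate_right j
  have h3 : (fdiff h2)^[k] ((fdiff h1)^[j] f) = (fdiff h1)^[j] ((fdiff h2)^[k] f) :=
    congrFun (hcc.comp_eq) f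
  rw [h3, fdiff_iter_vanish N f hf h2 k hk, fdiff_iter_zero]

include hf in
theorem grid (x0 h1 h2 : ℝ) :
    ∀ m n : ℕ, f (x0 + m * h1 + n * h2)
      = ∑ j ∈ range (N+1), ∑ k ∈ range (N+1),
          (m.choose j : ℝ) * (n.choose k : ℝ) * ((fdiff h2)^[k] ((fdiff h1)^[j] f)) x0 := by
  intro m n
  -- Newton in first variable
  have hA : f (x0 + m * h1 + n * h2)
      = ∑ j ∈ range (m+1), (m.choose j : ℝ) * ((fdiff h1)^[j] f) (x0 + n*h2) := by
    have := newton m (fun m' : ℕ => f ((x0 + n*h2) + m' * h1))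
    simp only [dseq_iter h1 _ f (x0 + n*h2)] at this
    have harg : (x0 + n*h2) + m * h1 = x0 + m * h1 + n * h2 := by ring
    rw [harg] at this
    convert this using 3
    ring
  rw [hA]
  have hA' : ∑ j ∈ range (m+1), (m.choose j : ℝ) * ((fdiff h1)^[j] f) (x0 + n*h2)
      = ∑ j ∈ range (N+1), (m.choose j : ℝ) * ((fdiff h1)^[j] f) (x0 + n*h2) := by
    apply sum_trunc
    · intro j hj; rw [Nat.choose_eq_zero_of_lt hj]; exact Nat.cast_zero
    · intro j hj
      rw [fdiff_iter_vanish N f hf h1 j hj]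
  rw [hA']
  apply Finset.sum_congr rfl
  intro j _
  -- Newton in second variable applied to g := (fdiff h1)^[j] f
  set g : ℝ → ℝ := (fdiff h1)^[j] f with hg
  have hB : g (x0 + n*h2) = ∑ k ∈ range (n+1), (n.choose k : ℝ) * ((fdiff h2)^[k] g) x0 := by
    have := newton n (fun n' : ℕ => g (x0 + n' * h2))
    simp only [dseq_iter h2 _ g x0] at this
    convert this using 3
    norm_num
  have hB' : ∑ k ∈ range (n+1), (n.choose k : ℝ) * ((fdiff h2)^[k] g) x0
      = ∑ k ∈ range (N+1), (n.choose k : ℝ) * ((fdiff h2)^[k] g) x0 := by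
    apply sum_trunc
    · intro k hk; rw [Nat.choose_eq_zero_of_lt hk]; exact Nat.cast_zero
    · intro k hk
      rw [fdiff_iter_mixed_vanish N f hf h1 h2 j k hk]
  rw [hB, hB', Finset.mul_sum]
  apply Finset.sum_congr rfl
  intro k _
  ring

end Grid


-- L3: cast choose as real product
lemma cast_choose_prod (M j : ℕ) :
    (M.choose j : ℝ) = (∏ i ∈ range j, ((M:ℝ) - i)) / (j.factorial : ℝ) := by
  rcases le_or_gt j M with h | h
  · have hd : (M.descFactorial j : ℝ) = ∏ i ∈ range j, ((M:ℝ) - i) := by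
      rw [Nat.descFactorial_eq_prod_range, Nat.cast_prod]
      apply Finset.prod_congr rfl
      intro i hi
      rw [Finset.mem_range] at hi
      rw [Nat.cast_sub (le_trans (le_of_lt hi) h)]
    rw [← hd, Nat.descFactorial_eq_factorial_mul_choose]
    field_simp
    push_cast; ring
  · rw [Nat.choose_eq_zero_of_lt h]
    have : ∏ i ∈ range j, ((M:ℝ) - i) = 0 := by
      apply Finset.prod_eq_zero (Finset.mem_range.2 h)
      simp
    rw [this]
    simp

-- the Newton basis polynomial composed with an affine map: pjq q A j evaluated at s
-- equals choose (q*s+A, j) when q*s+A is a natural number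
noncomputable def pjq (q A j : ℕ) : Polynomial ℝ :=
  C (1 / (j.factorial : ℝ)) * ∏ i ∈ range j, (C (q:ℝ) * X + C ((A:ℝ) - i))

lemma pjq_natDegree (q A j : ℕ) : (pjq q A j).natDegree ≤ j := by
  apply le_trans (natDegree_mul_le)
  rw [natDegree_C, zero_add]
  apply le_trans (natDegree_prod_le _ _)
  apply le_trans (Finset.sum_le_card_nsmul _ _ 1 ?_)
  · simp
  · intro i _
    apply le_trans (natDegree_add_le _ _)
    simp only [natDegree_C, max_le_iff]
    exact ⟨le_trans (natDegree_C_mul_le _ _) (by simp), by simp⟩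

lemma pjq_eval (q A j : ℕ) (s : ℝ) (m : ℕ) (hm : (q:ℝ) * s + A = (m:ℝ)) :
    (pjq q A j).eval s = (m.choose j : ℝ) := by
  rw [cast_choose_prod]
  simp only [pjq, eval_mul, eval_C, eval_prod, eval_add, eval_mul, eval_X]
  have hp : ∏ x ∈ range j, ((q:ℝ) * s + ((A:ℝ) - x)) = ∏ i ∈ range j, ((m:ℝ) - i) := by
    apply Finset.prod_congr rfl
    intro i _
    rw [← hm]
    ring
  rw [hp]
  ring


-- expand a linear combination of low-degree polynomials into monomials
lemma expand_sum (D : ℕ) (c : ℕ → ℝ) (g : ℕ → Polynomial ℝ) (hg : ∀ j, (g j).natDegree < D)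
    (s : ℝ) :
    ∑ j ∈ range D, c j * (g j).eval s
      = ∑ m ∈ range D, (∑ j ∈ range D, c j * (g j).coeff m) * s^m := by
  have h1 : ∑ j ∈ range D, c j * (g j).eval s
      = (∑ j ∈ range D, C (c j) * g j).eval s := by
    rw [eval_finset_sum]
    apply Finset.sum_congr rfl
    intro j _
    simp
  rw [h1, eval_eq_sum_range' (n := D) ?hd s]
  case hd =>
    apply lt_of_le_of_lt (natDegree_sum_le _ _)
    rcases Nat.eq_zero_or_pos D with h | h
    · exact absurd (hg 0) (by omega)
    · rw [Finset.fold_max_lt]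
      refine ⟨h, ?_⟩
      intro j _
      exact lt_of_le_of_lt (natDegree_C_mul_le _ _) (hg j)
  apply Finset.sum_congr rfl
  intro m _
  congr 1
  rw [finset_sum_coeff]
  apply Finset.sum_congr rfl
  intro j _
  rw [coeff_C_mul]

lemma poly2_sum (D : ℕ) (a : ℕ → ℕ → ℝ) (g h : ℕ → Polynomial ℝ)
    (hg : ∀ j, (g j).natDegree < D) (hh : ∀ k, (h k).natDegree < D) :
    ∃ b : ℕ → ℕ → ℝ, ∀ s t : ℝ,
      ∑ j ∈ range D, ∑ k ∈ range D, a j k * (g j).eval s * (h k).eval t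
        = ∑ m ∈ range D, ∑ l ∈ range D, b m l * s^m * t^l := by
  refine ⟨fun m l => ∑ k ∈ range D, (∑ j ∈ range D, a j k * (g j).coeff m) * (h k).coeff l,
    fun s t => ?_⟩
  have step1 : ∑ j ∈ range D, ∑ k ∈ range D, a j k * (g j).eval s * (h k).eval t
      = ∑ j ∈ range D, (∑ k ∈ range D, a j k * (h k).eval t) * (g j).eval s := by
    apply Finset.sum_congr rfl
    intro j _
    rw [Finset.sum_mul]
    apply Finset.sum_congr rfl
    intro k _
    ring
  rw [step1, expand_sum D _ g hg s]
  apply Finset.sum_congr rfl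
  intro m _
  have step2 : ∑ j ∈ range D, (∑ k ∈ range D, a j k * (h k).eval t) * (g j).coeff m
      = ∑ k ∈ range D, (∑ j ∈ range D, a j k * (g j).coeff m) * (h k).eval t := by
    have l1 : ∑ j ∈ range D, (∑ k ∈ range D, a j k * (h k).eval t) * (g j).coeff m
        = ∑ j ∈ range D, ∑ k ∈ range D, a j k * (g j).coeff m * (h k).eval t := by
      apply Finset.sum_congr rfl
      intro j _
      rw [Finset.sum_mul]
      apply Finset.sum_congr rfl
      intro k _
      ring
    have l2 : ∑ k ∈ range D, (∑ j ∈ range D, a j k * (g j).coeff m) * (h k).eval t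
        = ∑ k ∈ range D, ∑ j ∈ range D, a j k * (g j).coeff m * (h k).eval t := by
      apply Finset.sum_congr rfl
      intro k _
      rw [Finset.sum_mul]
    rw [l1, l2, Finset.sum_comm]
  rw [step2, expand_sum D _ h hh t, Finset.sum_mul]
  apply Finset.sum_congr rfl
  intro l _
  ring


lemma eval_monos (D : ℕ) (c : ℕ → ℝ) (y : ℝ) :
    (∑ i ∈ range D, C (c i) * X^i).eval y = ∑ i ∈ range D, c i * y^i := by
  rw [eval_finset_sum]
  apply Finset.sum_congr rfl
  intro i _
  simp

lemma zero_of_nat_roots (p : Polynomial ℝ) (h : ∀ n : ℕ, p.eval (n:ℝ) = 0) : p = 0 :=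
  p.eq_zero_of_infinite_isRoot
    (Set.infinite_of_injective_forall_mem (f := fun n : ℕ => (n:ℝ))
      Nat.cast_injective (fun n => h n))

lemma zero_of_Ioo_roots (p : Polynomial ℝ) (a b : ℝ) (hab : a < b)
    (h : ∀ y ∈ Set.Ioo a b, p.eval y = 0) : p = 0 := by
  exact p.eq_zero_of_infinite_isRoot
    ((Set.Ioo_infinite hab).mono (fun y hy => h y hy))

lemma eval_const_of_bounded (p : Polynomial ℝ) (Cb : ℝ) (h : ∀ t : ℝ, |p.eval t| ≤ Cb) :
    ∀ t : ℝ, p.eval t = p.eval 0 := by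
  have hb : Filter.IsBoundedUnder (· ≤ ·) Filter.atTop fun x => |p.eval x| :=
    ⟨Cb, Filter.eventually_map.mpr (Filter.Eventually.of_forall (fun x => h x))⟩
  have hd : p.degree ≤ 0 := (Polynomial.abs_isBoundedUnder_iff p).1 hb
  obtain ⟨c, rfl⟩ : ∃ c, p = C c := ⟨p.coeff 0, (Polynomial.eq_C_of_degree_le_zero hd)⟩
  simp

-- two 2-variable polynomial expansions agreeing on ℕ × ℕ agree everywhere
lemma poly2_ext (D : ℕ) (b b' : ℕ → ℕ → ℝ)
    (h : ∀ m n : ℕ, ∑ j ∈ range D, ∑ k ∈ range D, b j k * (m:ℝ)^j * (n:ℝ)^k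
        = ∑ j ∈ range D, ∑ k ∈ range D, b' j k * (m:ℝ)^j * (n:ℝ)^k) :
    ∀ s t : ℝ, ∑ j ∈ range D, ∑ k ∈ range D, b j k * s^j * t^k
        = ∑ j ∈ range D, ∑ k ∈ range D, b' j k * s^j * t^k := by
  -- helper: rewrite double sum as eval of polynomial in first variable
  have rep : ∀ (c : ℕ → ℕ → ℝ) (s t : ℝ),
      ∑ j ∈ range D, ∑ k ∈ range D, c j k * s^j * t^k
        = (∑ j ∈ range D, C (∑ k ∈ range D, c j k * t^k) * X^j).eval s := by
    intro c s t
    rw [eval_monos]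
    apply Finset.sum_congr rfl
    intro j _
    rw [Finset.sum_mul]
    apply Finset.sum_congr rfl
    intro k _
    ring
  -- first: for fixed n : ℕ, equality for all real s
  have step1 : ∀ (n : ℕ) (s : ℝ),
      ∑ j ∈ range D, ∑ k ∈ range D, b j k * s^j * (n:ℝ)^k
        = ∑ j ∈ range D, ∑ k ∈ range D, b' j k * s^j * (n:ℝ)^k := by
    intro n s
    have hz : (∑ j ∈ range D, C (∑ k ∈ range D, b j k * (n:ℝ)^k) * X^j)
        - (∑ j ∈ range D, C (∑ k ∈ range D, b' j k * (n:ℝ)^k) * X^j) = 0 := by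
      apply zero_of_nat_roots
      intro m
      rw [eval_sub, sub_eq_zero, ← rep, ← rep]
      exact h m n
    rw [rep, rep, ← sub_eq_zero, ← eval_sub, hz, eval_zero]
  -- then: for fixed real s, equality for all real t
  intro s t
  have rep2 : ∀ (c : ℕ → ℕ → ℝ) (t : ℝ),
      ∑ j ∈ range D, ∑ k ∈ range D, c j k * s^j * t^k
        = (∑ k ∈ range D, C (∑ j ∈ range D, c j k * s^j) * X^k).eval t := by
    intro c t
    rw [eval_monos, Finset.sum_comm]
    apply Finset.sum_congr rfl
    intro k _
    rw [Finset.sum_mul]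
  have hz : (∑ k ∈ range D, C (∑ j ∈ range D, b j k * s^j) * X^k)
      - (∑ k ∈ range D, C (∑ j ∈ range D, b' j k * s^j) * X^k) = 0 := by
    apply zero_of_nat_roots
    intro n
    rw [eval_sub, sub_eq_zero, ← rep2, ← rep2]
    exact step1 n s
  rw [rep2, rep2, ← sub_eq_zero, ← eval_sub, hz, eval_zero]
theorem rat_rep (N : ℕ) (f : ℝ → ℝ) (hf : ∀ x h : ℝ, ((fdiff h)^[N + 1] f) x = 0) (x : ℝ) :
    ∃ b : ℕ → ℕ → ℝ, ∀ s t : ℚ,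
      f (s + t * x) = ∑ j ∈ range (N+1), ∑ k ∈ range (N+1), b j k * (s:ℝ)^j * (t:ℝ)^k := by
  classical
  -- the family of polynomials used in the Newton representation, capped degree
  have hdeg : ∀ q A j : ℕ, (pjq q A (min j N)).natDegree < N + 1 :=
    fun q A j => lt_of_le_of_lt (pjq_natDegree q A (min j N)) (by omega)
  -- key: Newton's representation at grid points with denominator q and shift A
  have key : ∀ q A : ℕ, 0 < q → ∃ aa : ℕ → ℕ → ℝ, ∀ (u v : ℝ) (m n : ℕ),
      ((q:ℝ) * u + A = m) → ((q:ℝ) * v + A = n) →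
      f (u + v * x) = ∑ j ∈ range (N+1), ∑ k ∈ range (N+1),
        aa j k * (pjq q A (min j N)).eval u * (pjq q A (min k N)).eval v := by
    intro q A hq
    have hq0 : (q:ℝ) ≠ 0 := Nat.cast_ne_zero.2 (Nat.pos_iff_ne_zero.1 hq)
    set x0 : ℝ := -((A:ℝ)/q) - ((A:ℝ)/q) * x with hx0
    refine ⟨fun j k => ((fdiff (x/q))^[k] ((fdiff (1/q))^[j] f)) x0, ?_⟩
    intro u v m n hu hv
    have harg : u + v * x = x0 + m * (1/q) + n * (x/q) := by
      have h1 : u = ((m:ℝ) - A)/q := by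
        rw [eq_div_iff hq0]; linear_combination hu
      have h2 : v = ((n:ℝ) - A)/q := by
        rw [eq_div_iff hq0]; linear_combination hv
      rw [h1, h2, hx0]
      field_simp
      ring
    rw [harg, grid N f hf x0 (1/q) (x/q) m n]
    apply Finset.sum_congr rfl
    intro j hj
    apply Finset.sum_congr rfl
    intro k hk
    rw [Finset.mem_range] at hj hk
    have hjm : min j N = j := by omega
    have hkm : min k N = k := by omega
    rw [hjm, hkm, pjq_eval q A j u m hu, pjq_eval q A k v n hv]
    ring
  -- instantiate at q = 1, A = 0 and expand into monomials
  obtain ⟨a1, ha1⟩ := key 1 0 Nat.one_pos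
  obtain ⟨b1, hb1⟩ := poly2_sum (N+1) a1 (fun j => pjq 1 0 (min j N)) (fun k => pjq 1 0 (min k N))
    (hdeg 1 0) (hdeg 1 0)
  refine ⟨b1, ?_⟩
  intro s t
  -- set up denominators
  set q : ℕ := s.den * t.den with hqdef
  have hq : 0 < q := Nat.mul_pos s.pos t.pos
  set sm : ℤ := s.num * t.den with hsm
  set tn : ℤ := t.num * s.den with htn
  set A : ℕ := sm.natAbs + tn.natAbs with hA
  have hAabs : (A:ℤ) = |sm| + |tn| := by
    rw [hA]; push_cast [Int.natCast_natAbs]; ring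
  have hm0 : (0:ℤ) ≤ sm + A := by
    rw [hAabs]
    have h1 := neg_abs_le sm
    have h2 := abs_nonneg tn
    linarith
  have hn0 : (0:ℤ) ≤ tn + A := by
    rw [hAabs]
    have h1 := neg_abs_le tn
    have h2 := abs_nonneg sm
    linarith
  set m : ℕ := (sm + A).toNat with hmdef
  set n : ℕ := (tn + A).toNat with hndef
  have hmZ : (m:ℤ) = sm + A := Int.toNat_of_nonneg hm0
  have hnZ : (n:ℤ) = tn + A := Int.toNat_of_nonneg hn0
  have hmR : (m:ℝ) = (sm:ℝ) + A := by exact_mod_cast congrArg (Int.cast : ℤ → ℝ) hmZ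
  have hnR : (n:ℝ) = (tn:ℝ) + A := by exact_mod_cast congrArg (Int.cast : ℤ → ℝ) hnZ
  have hu : (q:ℝ) * (s:ℝ) + A = (m:ℝ) := by
    rw [hmR, hsm, hqdef]
    have : (s:ℝ) = (s.num:ℝ) / (s.den:ℝ) := by rw [Rat.cast_def]
    rw [this]
    have hsd : (s.den:ℝ) ≠ 0 := Nat.cast_ne_zero.2 s.den_nz
    push_cast
    field_simp
  have hv : (q:ℝ) * (t:ℝ) + A = (n:ℝ) := by
    rw [hnR, htn, hqdef]
    have : (t:ℝ) = (t.num:ℝ) / (t.den:ℝ) := by rw [Rat.cast_def]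
    rw [this]
    have htd : (t.den:ℝ) ≠ 0 := Nat.cast_ne_zero.2 t.den_nz
    push_cast
    field_simp
  -- representation at (s,t) via denominator q
  obtain ⟨aq, haq⟩ := key q A hq
  obtain ⟨bq, hbq⟩ := poly2_sum (N+1) aq (fun j => pjq q A (min j N)) (fun k => pjq q A (min k N))
    (hdeg q A) (hdeg q A)
  have hfst : f (s + t * x) = ∑ j ∈ range (N+1), ∑ k ∈ range (N+1), bq j k * (s:ℝ)^j * (t:ℝ)^k := by
    rw [haq (s:ℝ) (t:ℝ) m n hu hv, hbq]
  -- the two monomial representations agree on ℕ × ℕ, hence everywhere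
  have hagree : ∀ m' n' : ℕ, ∑ j ∈ range (N+1), ∑ k ∈ range (N+1), bq j k * (m':ℝ)^j * (n':ℝ)^k
      = ∑ j ∈ range (N+1), ∑ k ∈ range (N+1), b1 j k * (m':ℝ)^j * (n':ℝ)^k := by
    intro m' n'
    have hu' : (q:ℝ) * (m':ℝ) + A = ((q * m' + A : ℕ):ℝ) := by push_cast; ring
    have hv' : (q:ℝ) * (n':ℝ) + A = ((q * n' + A : ℕ):ℝ) := by push_cast; ring
    have hu1 : ((1:ℕ):ℝ) * (m':ℝ) + ((0:ℕ):ℝ) = ((m' : ℕ):ℝ) := by push_cast; ring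
    have hv1 : ((1:ℕ):ℝ) * (n':ℝ) + ((0:ℕ):ℝ) = ((n' : ℕ):ℝ) := by push_cast; ring
    rw [← hbq, ← hb1, ← haq (m':ℝ) (n':ℝ) _ _ hu' hv', ← ha1 (m':ℝ) (n':ℝ) _ _ hu1 hv1]
  have := poly2_ext (N+1) bq b1 hagree (s:ℝ) (t:ℝ)
  rw [hfst, this]
-- representation lemmas for the double sum as 1-variable polynomial evaluations
lemma rep_row (D : ℕ) (c : ℕ → ℕ → ℝ) (s t : ℝ) :
    ∑ j ∈ range D, ∑ k ∈ range D, c j k * s^j * t^k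
      = (∑ j ∈ range D, C (∑ k ∈ range D, c j k * t^k) * X^j).eval s := by
  rw [eval_finset_sum]
  apply Finset.sum_congr rfl
  intro j _
  simp only [eval_mul, eval_C, eval_pow, eval_X]
  rw [Finset.sum_mul]
  apply Finset.sum_congr rfl
  intro k _
  ring

lemma rep_sub (D : ℕ) (c : ℕ → ℕ → ℝ) (x v t : ℝ) :
    ∑ j ∈ range D, ∑ k ∈ range D, c j k * (v - t*x)^j * t^k
      = (∑ j ∈ range D, ∑ k ∈ range D, Polynomial.C (c j k) * (Polynomial.C v - Polynomial.C x * X)^j * X^k).eval t := by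
  rw [eval_finset_sum]
  apply Finset.sum_congr rfl
  intro j _
  rw [eval_finset_sum]
  apply Finset.sum_congr rfl
  intro k _
  simp only [eval_mul, eval_C, eval_pow, eval_sub, eval_X]
  ring

lemma rep_sub2 (D : ℕ) (c : ℕ → ℕ → ℝ) (x v t : ℝ) :
    ∑ j ∈ range D, ∑ k ∈ range D, c j k * (v - t*x)^j * t^k
      = (∑ j ∈ range D, ∑ k ∈ range D, Polynomial.C (c j k) * (X - Polynomial.C (t*x))^j * Polynomial.C (t^k)).eval v := by
  rw [eval_finset_sum]
  apply Finset.sum_congr rfl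
  intro j _
  rw [eval_finset_sum]
  apply Finset.sum_congr rfl
  intro k _
  simp only [eval_mul, eval_C, eval_pow, eval_sub, eval_X]

-- a continuous function ≤ M on rationals is ≤ M everywhere
lemma le_of_rat_le (g : ℝ → ℝ) (hg : Continuous g) (M : ℝ) (h : ∀ q : ℚ, g q ≤ M) :
    ∀ y : ℝ, g y ≤ M := by
  intro y
  by_contra hy
  push_neg at hy
  have hopen : IsOpen {z : ℝ | M < g z} := isOpen_lt continuous_const hg
  obtain ⟨q, hq⟩ := Rat.denseRange_cast.exists_mem_open hopen ⟨y, hy⟩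
  exact absurd (h q) (not_le.2 hq)

lemma main2 (N : ℕ) (f : ℝ → ℝ)
    (hf : ∀ x h : ℝ, ((fdiff h)^[N + 1] f) x = 0)
    (a b : ℝ) (hab : a < b) (M : ℝ) (hbd : ∀ y ∈ Set.Ioo a b, |f y| ≤ M) (x : ℝ) :
    ∃ p : Polynomial ℝ, p.natDegree ≤ N ∧ (∀ s : ℚ, f (s:ℝ) = p.eval (s:ℝ)) ∧ f x = p.eval x := by
  obtain ⟨bb, hbb⟩ := rat_rep N f hf x
  set D := N + 1 with hD
  set F : ℝ → ℝ → ℝ := fun s t => ∑ j ∈ range D, ∑ k ∈ range D, bb j k * s^j * t^k with hF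
  -- Claim 1: density bound
  have claim1 : ∀ t : ℚ, ∀ u : ℝ, a - t*x < u → u < b - t*x → |F u t| ≤ M := by
    intro t u h1 h2
    set p : Polynomial ℝ := ∑ j ∈ range D, C (∑ k ∈ range D, bb j k * (t:ℝ)^k) * X^j with hp
    have hFu : ∀ u' : ℝ, F u' t = p.eval u' := fun u' => rep_row D bb u' t
    rw [hFu]
    by_contra hcon
    push_neg at hcon
    have hopen : IsOpen ({z : ℝ | M < |p.eval z|} ∩ Set.Ioo (a - t*x) (b - t*x)) :=
      (isOpen_lt continuous_const (continuous_abs.comp (p.continuous_aeval))).inter isOpen_Ioo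
    obtain ⟨q, hq⟩ := Rat.denseRange_cast.exists_mem_open hopen ⟨u, hcon, h1, h2⟩
    have hqin : (q:ℝ) + t*x ∈ Set.Ioo a b := by
      constructor
      · have := hq.2.1; simp at this ⊢; linarith [hq.2.1]
      · have := hq.2.2; simp at this ⊢; linarith [hq.2.2]
    have hbound := hbd _ hqin
    have : f ((q:ℝ) + (t:ℝ)*x) = F (q:ℝ) (t:ℝ) := hbb q t
    rw [this, hFu] at hbound
    exact absurd hbound (not_le.2 hq.1)
  -- Claim 2: for v in the interval, F (v - t x) t is constant in t
  have claim2 : ∀ v : ℝ, a < v → v < b → ∀ t : ℝ, F (v - t*x) t = F v 0 := by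
    intro v hv1 hv2 t
    set pT : Polynomial ℝ :=
      ∑ j ∈ range D, ∑ k ∈ range D, C (bb j k) * (C v - C x * X)^j * X^k with hpT
    have hev : ∀ t' : ℝ, F (v - t'*x) t' = pT.eval t' := fun t' => rep_sub D bb x v t'
    have hbound : ∀ t' : ℝ, |pT.eval t'| ≤ M := by
      apply le_of_rat_le _ (continuous_abs.comp pT.continuous_aeval)
      intro s
      show |pT.eval ((s:ℚ):ℝ)| ≤ M
      rw [← hev]
      exact claim1 s _ (by linarith) (by linarith)
    have hconst := eval_const_of_bounded pT M hbound
    rw [hev, hconst t, ← hev 0]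
    norm_num
  -- Claim 3: F (w - t x) t = F w 0 for all real w t
  have claim3 : ∀ t w : ℝ, F (w - t*x) t = F w 0 := by
    intro t w
    set q1 : Polynomial ℝ :=
      ∑ j ∈ range D, ∑ k ∈ range D, C (bb j k) * (X - C (t*x))^j * C (t^k) with hq1
    set q2 : Polynomial ℝ :=
      ∑ j ∈ range D, C (∑ k ∈ range D, bb j k * (0:ℝ)^k) * X^j with hq2
    have he1 : ∀ w' : ℝ, F (w' - t*x) t = q1.eval w' := fun w' => rep_sub2 D bb x w' t
    have he2 : ∀ w' : ℝ, F w' 0 = q2.eval w' := fun w' => rep_row D bb w' 0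
    have hz : q1 - q2 = 0 := by
      apply zero_of_Ioo_roots _ a b hab
      intro y hy
      rw [eval_sub, ← he1, ← he2, claim2 y hy.1 hy.2 t, sub_self]
    have := congrArg (fun p => Polynomial.eval w p) hz
    simp only [eval_sub, eval_zero] at this
    rw [he1, he2, sub_eq_zero.1 this]
  -- assemble the polynomial
  refine ⟨∑ j ∈ range D, C (∑ k ∈ range D, bb j k * (0:ℝ)^k) * X^j, ?_, ?_, ?_⟩
  · apply Polynomial.natDegree_sum_le_of_forall_le
    intro j hj
    rw [Finset.mem_range] at hj
    calc (C (∑ k ∈ range D, bb j k * (0:ℝ)^k) * X^j).natDegree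
        ≤ (X^j : Polynomial ℝ).natDegree := natDegree_C_mul_le _ _
      _ ≤ N := by rw [natDegree_X_pow]; omega
  · intro s
    have h0 : f ((s:ℝ) + ((0:ℚ):ℝ) * x) = F (s:ℝ) ((0:ℚ):ℝ) := hbb s 0
    simp only [Rat.cast_zero, zero_mul, add_zero] at h0
    rw [h0, ← rep_row]
  · have h1 : f (((0:ℚ):ℝ) + ((1:ℚ):ℝ) * x) = F ((0:ℚ):ℝ) ((1:ℚ):ℝ) := hbb 0 1
    simp only [Rat.cast_zero, Rat.cast_one, zero_add, one_mul] at h1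
    have h2 : F (x - 1*x) 1 = F x 0 := claim3 1 x
    simp only [one_mul, sub_self] at h2
    rw [h1, h2, ← rep_row]
theorem stmt18 (N : ℕ) (f : ℝ → ℝ)
    (hf : ∀ x h : ℝ, ((fdiff h)^[N + 1] f) x = 0)
    (a b : ℝ) (hab : a < b) (M : ℝ) (hbd : ∀ x ∈ Set.Ioo a b, |f x| ≤ M) :
    ∃ c : Fin (N + 1) → ℝ, ∀ x : ℝ, f x = ∑ i : Fin (N + 1), c i * x ^ (i : ℕ) := by
  obtain ⟨p0, hp0deg, hp0rat, _⟩ := main2 N f hf a b hab M hbd 0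
  have hall : ∀ x : ℝ, f x = p0.eval x := by
    intro x
    obtain ⟨px, hpxdeg, hpxrat, hpxx⟩ := main2 N f hf a b hab M hbd x
    have hzz : px - p0 = 0 := by
      apply zero_of_nat_roots
      intro n
      have h1 : ((n:ℚ):ℝ) = (n:ℝ) := by push_cast; rfl
      have h2 := hpxrat (n:ℚ)
      have h3 := hp0rat (n:ℚ)
      rw [h1] at h2 h3
      rw [eval_sub, ← h2, ← h3, sub_self]
    have : px = p0 := by rwa [sub_eq_zero] at hzz
    rw [hpxx, this]
  refine ⟨fun i => p0.coeff (i : ℕ), fun x => ?_⟩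
  rw [hall x, Polynomial.eval_eq_sum_range' (lt_of_le_of_lt hp0deg (Nat.lt_succ_self N)) x]
  rw [← Fin.sum_univ_eq_sum_range (fun i => p0.coeff i * x ^ i) (N+1)]
end

section
/- If f : ℝ → ℝ is a polynomial function (Δ_h^{N+1} f = 0 for all h) with monomial decomposition f = f₀ + f₁ + ⋯ + f_N, and the top monomial f_N is discontinuous, then f is unbounded on every interval [a,b] with a < b. -/
namespace Aux

lemma fdiff_comm (a b : ℝ) (f : ℝ → ℝ) : fdiff a (fdiff b f) = fdiff b (fdiff a f) := by
  funext x; simp [fdiff]; ring_nf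

lemma iter_fdiff_comm (a b : ℝ) (j : ℕ) (f : ℝ → ℝ) :
    fdiff a ((fdiff b)^[j] f) = (fdiff b)^[j] (fdiff a f) := by
  induction j generalizing f with
  | zero => rfl
  | succ j ih =>
    rw [Function.iterate_succ_apply, Function.iterate_succ_apply, ih, fdiff_comm]

lemma iter_fdiff_zero (h : ℝ) (j : ℕ) (x : ℝ) : (fdiff h)^[j] (fun _ => (0:ℝ)) x = 0 := by
  induction j generalizing x with
  | zero => rfl
  | succ j ih =>
    rw [Function.iterate_succ_apply]
    have : fdiff h (fun _ => (0:ℝ)) = fun _ => (0:ℝ) := by funext y; simp [fdiff]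
    rw [this]; exact ih x

lemma iter_shift (u c : ℝ) (j : ℕ) (g : ℝ → ℝ) (x : ℝ) :
    (fdiff u)^[j] (fun y => g (y + c)) x = (fdiff u)^[j] g (x + c) := by
  induction j generalizing x with
  | zero => rfl
  | succ j ih =>
    rw [Function.iterate_succ_apply', Function.iterate_succ_apply']
    simp only [fdiff, ih]
    ring_nf

lemma iter_sum {ι : Type*} (u : ℝ) (j : ℕ) (s : Finset ι) (g : ι → ℝ → ℝ) (x : ℝ) :
    (fdiff u)^[j] (fun y => ∑ i ∈ s, g i y) x = ∑ i ∈ s, (fdiff u)^[j] (g i) x := by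
  induction j generalizing g x with
  | zero => rfl
  | succ j ih =>
    rw [Function.iterate_succ_apply]
    have : fdiff u (fun y => ∑ i ∈ s, g i y) = fun y => ∑ i ∈ s, fdiff u (g i) y := by
      funext y; simp [fdiff, Finset.sum_sub_distrib]
    rw [this]
    exact ih (fun i => fdiff u (g i)) x

lemma tel (w : ℝ) (ψ : ℝ → ℝ) (n : ℕ) (x : ℝ) :
    fdiff ((n : ℝ) * w) ψ x = ∑ i ∈ Finset.range n, fdiff w ψ (x + (i : ℝ) * w) := by
  induction n with
  | zero => simp [fdiff]
  | succ n ih =>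
    rw [Finset.sum_range_succ, ← ih]
    simp only [fdiff]
    push_cast
    ring_nf

lemma per_nat (w : ℝ) (g : ℝ → ℝ) (hp : ∀ x, g (x + w) = g x) (n : ℕ) (x : ℝ) :
    g (x + (n : ℝ) * w) = g x := by
  induction n with
  | zero => simp
  | succ n ih =>
    push_cast
    have : x + ((n:ℝ) + 1) * w = (x + (n:ℝ) * w) + w := by ring
    rw [this, hp, ih]

lemma per_int (w : ℝ) (g : ℝ → ℝ) (hp : ∀ x, g (x + w) = g x) (m : ℤ) (x : ℝ) :
    g (x + (m : ℝ) * w) = g x := by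
  induction m using Int.induction_on with
  | zero => simp
  | succ n ih =>
    have e : x + (((n:ℤ) + 1 : ℤ) : ℝ) * w = (x + (((n:ℤ)):ℝ) * w) + w := by push_cast; ring
    rw [e, hp, ih]
  | pred n ih =>
    have e : x + ((-(n:ℤ) - 1 : ℤ) : ℝ) * w + w = x + ((-(n:ℤ) : ℤ):ℝ) * w := by push_cast; ring
    have h3 := hp (x + ((-(n:ℤ) - 1 : ℤ):ℝ) * w)
    rw [e] at h3
    rw [← h3]
    exact ih

lemma scaling (w : ℝ) : ∀ (j : ℕ) (ψ : ℝ → ℝ),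
    (∀ x, (fdiff w)^[j] ψ (x + w) = (fdiff w)^[j] ψ x) →
    ∀ (n : ℕ) (x : ℝ), (fdiff ((n:ℝ) * w))^[j] ψ x = (n:ℝ)^j * (fdiff w)^[j] ψ x := by
  intro j
  induction j with
  | zero => intro ψ hper n x; simp
  | succ j ih =>
    intro ψ hper n x
    rw [Function.iterate_succ_apply]
    have h1 : fdiff ((n:ℝ) * w) ψ = fun y => ∑ i ∈ Finset.range n, fdiff w ψ (y + (i:ℝ) * w) := by
      funext y; exact tel w ψ n y
    rw [h1]
    rw [iter_sum]
    have hper' : ∀ x, (fdiff w)^[j] (fdiff w ψ) (x + w) = (fdiff w)^[j] (fdiff w ψ) x := by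
      intro x
      exact hper x
    have h2 : ∀ i : ℕ, (fdiff ((n:ℝ)*w))^[j] (fun y => fdiff w ψ (y + (i:ℝ)*w)) x
        = (n:ℝ)^j * (fdiff w)^[j+1] ψ x := by
      intro i
      rw [iter_shift]
      rw [ih (fdiff w ψ) hper' n]
      congr 1
      rw [← Function.iterate_succ_apply]
      exact hper' |> fun hp => per_nat w ((fdiff w)^[j+1] ψ)
        (by intro y; rw [Function.iterate_succ_apply]; exact hp y) i x
    calc (∑ i ∈ Finset.range n, (fdiff ((n:ℝ)*w))^[j] (fun y => fdiff w ψ (y + (i:ℝ)*w)) x)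
        = ∑ i ∈ Finset.range n, (n:ℝ)^j * (fdiff w)^[j+1] ψ x := by
          exact Finset.sum_congr rfl (fun i _ => h2 i)
      _ = (n:ℝ)^(j+1) * (fdiff w)^[j+1] ψ x := by
          rw [Finset.sum_const, Finset.card_range]; push_cast; ring

lemma periodic_of_order (w : ℝ) (j : ℕ) (ψ : ℝ → ℝ)
    (h : ∀ x, (fdiff w)^[j+1] ψ x = 0) :
    ∀ x, (fdiff w)^[j] ψ (x + w) = (fdiff w)^[j] ψ x := by
  intro x
  have := h x
  rw [Function.iterate_succ_apply'] at this
  simp only [fdiff] at this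
  linarith

lemma bnd_ball (h : ℝ) (f : ℝ → ℝ) (C : ℝ) : ∀ (n : ℕ) (x : ℝ),
    (∀ y, |y - x| ≤ (n:ℝ) * |h| → |f y| ≤ C) → |(fdiff h)^[n] f x| ≤ 2^n * C := by
  intro n
  induction n with
  | zero => intro x hb; simpa using hb x (by simp)
  | succ n ih =>
    intro x hb
    rw [Function.iterate_succ_apply']
    have e1 : |(fdiff h)^[n] f (x + h)| ≤ 2^n * C := by
      apply ih
      intro y hy
      apply hb
      have : |y - x| ≤ |y - (x+h)| + |h| := by
        have := abs_sub_abs_le_abs_sub (y - x) (h); -- not quite; use triangle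
        calc |y - x| = |(y - (x+h)) + h| := by ring_nf
          _ ≤ |y - (x+h)| + |h| := abs_add_le _ _
      push_cast
      nlinarith [abs_nonneg h]
    have e2 : |(fdiff h)^[n] f x| ≤ 2^n * C := by
      apply ih
      intro y hy
      apply hb
      push_cast
      nlinarith [abs_nonneg h]
    simp only [fdiff]
    calc |(fdiff h)^[n] f (x + h) - (fdiff h)^[n] f x|
        ≤ |(fdiff h)^[n] f (x + h)| + |(fdiff h)^[n] f x| := abs_sub _ _
      _ ≤ 2^n * C + 2^n * C := by linarith
      _ = 2^(n+1) * C := by ring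

lemma lemB : ∀ (j : ℕ) (ψ : ℝ → ℝ) (C : ℝ), (∀ x, |ψ x| ≤ C) →
    (∀ w x, (fdiff w)^[j+1] ψ x = 0) → ∀ w x, fdiff w ψ x = 0 := by
  intro j
  induction j with
  | zero => intro ψ C _ h w x; simpa using h w x
  | succ j ih =>
    intro ψ C hC h
    apply ih ψ C hC
    intro w x
    by_cases hj : (fdiff w)^[j+1] ψ x = 0
    · exact hj
    · exfalso
      have hper := periodic_of_order w (j+1) ψ (h w)
      have hsc := scaling w (j+1) ψ hper
      have hb : ∀ n : ℕ, (n:ℝ)^(j+1) * |(fdiff w)^[j+1] ψ x| ≤ 2^(j+1) * C := by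
        intro n
        have := hsc n x
        have hbb : |(fdiff ((n:ℝ)*w))^[j+1] ψ x| ≤ 2^(j+1) * C := by
          apply bnd_ball
          intro y _; exact hC y
        rw [this, abs_mul, abs_pow] at hbb
        simpa [abs_of_nonneg (by positivity : (0:ℝ) ≤ (n:ℝ))] using hbb
      have hpos : 0 < |(fdiff w)^[j+1] ψ x| := abs_pos.mpr hj
      have hC0 : (0:ℝ) ≤ C := le_trans (abs_nonneg _) (hC 0)
      obtain ⟨n, hn⟩ := exists_nat_gt ((2^(j+1) * C) / |(fdiff w)^[j+1] ψ x|)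
      have h1 : (n:ℝ) + 1 ≤ ((n:ℝ)+1)^(j+1) := by
        calc (n:ℝ) + 1 = ((n:ℝ)+1)^1 := (pow_one _).symm
        _ ≤ ((n:ℝ)+1)^(j+1) := by
          apply pow_le_pow_right₀ (by linarith [Nat.cast_nonneg (α := ℝ) n]) (by omega)
      have hbn := hb (n+1)
      push_cast at hbn
      have h2 : (2^(j+1) * C) < ((n:ℝ)+1) * |(fdiff w)^[j+1] ψ x| := by
        rw [div_lt_iff₀ hpos] at hn; nlinarith
      nlinarith
lemma fdiff_zero_fun (g : ℝ → ℝ) : fdiff 0 g = fun _ => (0:ℝ) := by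
  funext x; simp [fdiff]

lemma iter_iter_comm (a b : ℝ) (m j : ℕ) (f : ℝ → ℝ) :
    (fdiff a)^[m] ((fdiff b)^[j] f) = (fdiff b)^[j] ((fdiff a)^[m] f) := by
  induction m generalizing f with
  | zero => rfl
  | succ m ih =>
    rw [Function.iterate_succ_apply, Function.iterate_succ_apply, iter_fdiff_comm, ih]

lemma global_of_periods (ψ : ℝ → ℝ) (h : ℝ) (hh : h ≠ 0)
    (hper : ∀ (q : ℚ) (x : ℝ), ψ (x + (q:ℝ) * h) = ψ x)
    (α β C : ℝ) (hab : α < β) (hb : ∀ x, x ∈ Set.Ioo α β → |ψ x| ≤ C) :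
    ∀ x, |ψ x| ≤ C := by
  intro x
  have key : ∃ q : ℚ, x + (q:ℝ) * h ∈ Set.Ioo α β := by
    rcases lt_or_gt_of_ne hh with hneg | hpos
    · have hlt : (β - x)/h < (α - x)/h :=
        div_lt_div_of_neg_of_lt hneg (by linarith)
      obtain ⟨q, hq1, hq2⟩ := exists_rat_btwn hlt
      have e1 := (div_lt_iff_of_neg hneg).mp hq1
      have e2 := (lt_div_iff_of_neg hneg).mp hq2
      exact ⟨q, by constructor <;> linarith⟩
    · have hlt : (α - x)/h < (β - x)/h := by gcongr <;> linarith
      obtain ⟨q, hq1, hq2⟩ := exists_rat_btwn hlt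
      have e1 := (lt_div_iff₀ hpos).mp hq2
      have e2 := (div_lt_iff₀ hpos).mp hq1
      exact ⟨q, by constructor <;> linarith⟩
  obtain ⟨q, hq⟩ := key
  calc |ψ x| = |ψ (x + (q:ℝ)*h)| := by rw [hper q x]
    _ ≤ C := hb _ hq

lemma const_of_order (F : ℝ → ℝ) (r : ℕ)
    (LB : ∀ R : ℝ, 0 ≤ R → ∃ C, ∀ x, |x| ≤ R → |F x| ≤ C)
    (hord : ∀ h x, (fdiff h)^[r+1] F x = 0) :
    ∀ h x y, (fdiff h)^[r] F x = (fdiff h)^[r] F y := by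
  match r with
  | 0 =>
    intro h x y
    have h1 := hord (y - x) x
    simp only [zero_add, Function.iterate_one, fdiff] at h1
    simp only [Function.iterate_zero, id_eq]
    have : x + (y - x) = y := by ring
    rw [this] at h1
    linarith
  | r + 1 =>
    intro h x y
    by_cases hh : h = 0
    · subst hh
      have hz : ∀ z : ℝ, (fdiff 0)^[r+1] F z = 0 := by
        intro z
        rw [Function.iterate_succ_apply, fdiff_zero_fun]
        exact iter_fdiff_zero 0 r z
      rw [hz x, hz y]
    · -- h ≠ 0
      set ψ : ℝ → ℝ := (fdiff h)^[r+1] F with hψ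
      -- ψ is (h / n)-periodic for every n ≥ 1
      have hpern : ∀ n : ℕ, n ≠ 0 → ∀ x, ψ (x + h / (n:ℝ)) = ψ x := by
        intro n hn x
        set v := h / (n:ℝ) with hv
        have hnv : (n:ℝ) * v = h := by
          have hn' : (n:ℝ) ≠ 0 := by exact_mod_cast hn
          rw [hv]; field_simp
        have hperv := periodic_of_order v (r+1) F (hord v)
        have hsc := scaling v (r+1) F hperv n
        have e1 : ψ (x + v) = (n:ℝ)^(r+1) * (fdiff v)^[r+1] F (x + v) := by
          rw [hψ, ← hnv]; exact hsc (x + v)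
        have e2 : ψ x = (n:ℝ)^(r+1) * (fdiff v)^[r+1] F x := by
          rw [hψ, ← hnv]; exact hsc x
        rw [e1, e2, hperv x]
      -- ψ has period q * h for every rational q
      have hperq : ∀ (q : ℚ) (x : ℝ), ψ (x + (q:ℝ) * h) = ψ x := by
        intro q x
        have hden : ((q.den:ℝ)) ≠ 0 := by
          exact_mod_cast q.den_nz
        have hqcast : (q:ℝ) * h = (q.num : ℝ) * (h / (q.den : ℝ)) := by
          rw [Rat.cast_def]; field_simp
        rw [hqcast]
        exact per_int (h / (q.den:ℝ)) ψ (hpern q.den q.den_nz) q.num x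
      obtain ⟨C, hC⟩ := LB (1 + ((r+1):ℝ) * |h|) (by positivity)
      have hbio : ∀ z, z ∈ Set.Ioo (0:ℝ) 1 → |ψ z| ≤ 2^(r+1) * C := by
        intro z hz
        apply bnd_ball
        intro y hy
        apply hC
        have : |y| ≤ |y - z| + |z| := by
          calc |y| = |(y - z) + z| := by ring_nf
            _ ≤ |y - z| + |z| := abs_add_le _ _
        have hz1 : |z| ≤ 1 := by
          rw [abs_of_pos hz.1]; exact le_of_lt hz.2
        push_cast at hy ⊢
        linarith
      have hglob := global_of_periods ψ h hh hperq 0 1 (2^(r+1)*C) one_pos hbio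
      have hψord : ∀ w z, (fdiff w)^[(r+1)+1] ψ z = 0 := by
        intro w z
        rw [hψ, iter_iter_comm]
        have : (fdiff w)^[(r+1)+1] F = fun _ => 0 := funext (hord w)
        rw [this]
        exact iter_fdiff_zero h (r+1) z
      have hB := lemB (r+1) ψ (2^(r+1)*C) hglob hψord
      have := hB (y - x) x
      simp only [fdiff] at this
      have hxy : x + (y - x) = y := by ring
      rw [hxy] at this
      show ψ x = ψ y
      linarith
noncomputable def D (L : List ℝ) (f : ℝ → ℝ) : ℝ → ℝ := L.foldr fdiff f

@[simp] lemma D_nil (f : ℝ → ℝ) : D [] f = f := rfl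

@[simp] lemma D_cons (a : ℝ) (t : List ℝ) (f : ℝ → ℝ) : D (a :: t) f = fdiff a (D t f) := rfl

lemma D_append (L₁ L₂ : List ℝ) (f : ℝ → ℝ) : D (L₁ ++ L₂) f = D L₁ (D L₂ f) := by
  induction L₁ with
  | nil => rfl
  | cons a t ih => simp only [List.cons_append, D_cons, ih]

lemma D_replicate (n : ℕ) (h : ℝ) (f : ℝ → ℝ) :
    D (List.replicate n h) f = (fdiff h)^[n] f := by
  induction n with
  | zero => rfl
  | succ n ih => rw [List.replicate_succ]; simp only [D_cons, ih, Function.iterate_succ_apply']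

lemma mixed_vanish : ∀ (r : ℕ) (F : ℝ → ℝ),
    (∀ R : ℝ, 0 ≤ R → ∃ C, ∀ x, |x| ≤ R → |F x| ≤ C) →
    (∀ h x, (fdiff h)^[r] F x = 0) →
    ∀ L : List ℝ, L.length = r → ∀ x, D L F x = 0 := by
  intro r
  induction r with
  | zero =>
    intro F _ hord L hL x
    rw [List.length_eq_zero_iff] at hL
    subst hL
    simpa using hord 0 x
  | succ r ih =>
    intro F LB hord L hL x
    rcases L.eq_nil_or_concat with hnil | ⟨L', u, hcon⟩
    · subst hnil; simp at hL
    · subst hcon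
      rw [List.concat_eq_append] at hL ⊢
      rw [D_append]
      have hG : D [u] F = fdiff u F := rfl
      rw [hG]
      set G := fdiff u F with hGdef
      have hconst := const_of_order F r LB hord
      have hGord : ∀ h z, (fdiff h)^[r] G z = 0 := by
        intro h z
        have : (fdiff h)^[r] G z = fdiff u ((fdiff h)^[r] F) z := by
          rw [hGdef, ← iter_fdiff_comm]
        rw [this]
        simp only [fdiff]
        rw [hconst h (z + u) z]
        ring
      have hGLB : ∀ R : ℝ, 0 ≤ R → ∃ C, ∀ z, |z| ≤ R → |G z| ≤ C := by
        intro R hR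
        obtain ⟨C, hC⟩ := LB (R + |u|) (by positivity)
        refine ⟨2 * C, ?_⟩
        intro z hz
        have h1 : |F (z + u)| ≤ C := by
          apply hC
          calc |z + u| ≤ |z| + |u| := abs_add_le _ _
            _ ≤ R + |u| := by linarith
        have h2 : |F z| ≤ C := hC z (by linarith [abs_nonneg u])
        calc |G z| = |F (z + u) - F z| := rfl
          _ ≤ |F (z + u)| + |F z| := abs_sub _ _
          _ ≤ 2 * C := by linarith
      have hlen : L'.length = r := by
        simp at hL; omega
      exact ih G hGLB hGord L' hlen x

lemma fdiff_add3 (a b : ℝ) (g : ℝ → ℝ) (x : ℝ) :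
    fdiff (a + b) g x = fdiff a g x + fdiff b g x + fdiff a (fdiff b g) x := by
  simp only [fdiff]
  ring_nf

lemma D_addfun (L : List ℝ) (f g : ℝ → ℝ) (x : ℝ) :
    D L (fun y => f y + g y) x = D L f x + D L g x := by
  induction L generalizing x with
  | nil => rfl
  | cons a t ih =>
    simp only [D_cons, fdiff]
    have e : ∀ y, D t (fun y => f y + g y) y = D t f y + D t g y := ih
    rw [e, e]
    ring

lemma D_congr (L : List ℝ) (f g : ℝ → ℝ) (hfg : ∀ y, f y = g y) (x : ℝ) :
    D L f x = D L g x := by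
  have : f = g := funext hfg
  rw [this]

lemma bnd_list (f : ℝ → ℝ) (C : ℝ) : ∀ (L : List ℝ) (x : ℝ),
    (∀ y, |y - x| ≤ (L.map (fun t => |t|)).sum → |f y| ≤ C) →
    |D L f x| ≤ 2^(L.length) * C := by
  intro L
  induction L with
  | nil => intro x hb; simpa using hb x (by simp)
  | cons a t ih =>
    intro x hb
    have hts : (0:ℝ) ≤ (t.map (fun t => |t|)).sum := by
      apply List.sum_nonneg
      intro y hy
      simp only [List.mem_map] at hy
      obtain ⟨z, _, hz⟩ := hy
      rw [← hz]; exact abs_nonneg z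
    have e1 : |D t f (x + a)| ≤ 2^(t.length) * C := by
      apply ih
      intro y hy
      apply hb
      simp only [List.map_cons, List.sum_cons]
      calc |y - x| = |(y - (x + a)) + a| := by ring_nf
        _ ≤ |y - (x+a)| + |a| := abs_add_le _ _
        _ ≤ |a| + (t.map (fun t => |t|)).sum := by linarith
    have e2 : |D t f x| ≤ 2^(t.length) * C := by
      apply ih
      intro y hy
      apply hb
      simp only [List.map_cons, List.sum_cons]
      linarith [abs_nonneg a]
    calc |D (a :: t) f x| = |D t f (x + a) - D t f x| := rfl
      _ ≤ |D t f (x + a)| + |D t f x| := abs_sub _ _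
      _ ≤ 2^(t.length) * C + 2^(t.length) * C := by linarith
      _ = 2^((a :: t).length) * C := by simp [List.length_cons]; ring

lemma cauchy_linear (E : ℝ → ℝ) (C : ℝ)
    (hadd : ∀ a b : ℝ, E (a + b) = E a + E b)
    (hbd : ∀ t, t ∈ Set.Icc (0:ℝ) 1 → |E t| ≤ C) :
    ∀ t, E t = t * E 1 := by
  set e : ℝ → ℝ := fun t => E t - t * E 1 with he
  have headd : ∀ a b, e (a + b) = e a + e b := by
    intro a b; simp only [he, hadd]; ring
  have he1 : e 1 = 0 := by simp [he]
  have hper : ∀ t, e (t + 1) = e t := by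
    intro t; rw [headd, he1]; ring
  have hperint : ∀ (m : ℤ) (t : ℝ), e (t + (m:ℝ)) = e t := by
    intro m t
    have := per_int 1 e hper m t
    simpa using this
  have hC' : ∀ t, |e t| ≤ C + |E 1| := by
    intro t
    have h1 : e t = e (t - (⌊t⌋:ℝ) + (⌊t⌋:ℝ)) := by ring_nf
    have h2 : e t = e (t - (⌊t⌋:ℝ)) := by rw [h1, hperint ⌊t⌋]
    rw [h2]
    have hf1 : 0 ≤ t - (⌊t⌋:ℝ) := by linarith [Int.floor_le t]
    have hf2 : t - (⌊t⌋:ℝ) ≤ 1 := by linarith [Int.lt_floor_add_one t]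
    have := hbd (t - (⌊t⌋:ℝ)) ⟨hf1, hf2⟩
    calc |e (t - (⌊t⌋:ℝ))| = |E (t - (⌊t⌋:ℝ)) - (t - (⌊t⌋:ℝ)) * E 1| := rfl
      _ ≤ |E (t - (⌊t⌋:ℝ))| + |(t - (⌊t⌋:ℝ))| * |E 1| := by
          rw [← abs_mul]; exact abs_sub _ _
      _ ≤ C + 1 * |E 1| := by
          have : |(t - (⌊t⌋:ℝ))| ≤ 1 := by rw [abs_of_nonneg hf1]; exact hf2
          have hE1 : (0:ℝ) ≤ |E 1| := abs_nonneg _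
          nlinarith
      _ = C + |E 1| := by ring
  have hE0 : E 0 = 0 := by have := hadd 0 0; simp at this; linarith
  have hnat : ∀ (n : ℕ) (t : ℝ), e ((n:ℝ) * t) = (n:ℝ) * e t := by
    intro n t
    induction n with
    | zero => simp [he, hE0]
    | succ n ih =>
      push_cast
      have : ((n:ℝ) + 1) * t = (n:ℝ) * t + t := by ring
      rw [this, headd, ih]
      ring
  intro t
  have hzero : e t = 0 := by
    by_contra hne
    have hpos : 0 < |e t| := abs_pos.mpr hne
    obtain ⟨n, hn⟩ := exists_nat_gt ((C + |E 1|) / |e t|)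
    have h1 : ((n:ℝ)+1) * |e t| ≤ C + |E 1| := by
      have := hC' (((n:ℕ)+1 : ℝ) * t)
      have e2 : |e (((n:ℕ)+1:ℝ) * t)| = ((n:ℝ)+1) * |e t| := by
        push_cast
        rw [(by push_cast; rfl : ((n:ℝ)+1) * t = (((n+1:ℕ)):ℝ) * t), hnat (n+1) t]
        rw [abs_mul]
        congr 1
        rw [abs_of_nonneg (by positivity)]
        push_cast; ring
      rw [← e2]
      push_cast at this ⊢
      exact this
    rw [div_lt_iff₀ hpos] at hn
    nlinarith [abs_nonneg (e t)]
  simp only [he] at hzero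
  linarith

lemma sum_abs_nonneg (L : List ℝ) : (0:ℝ) ≤ (L.map (fun t => |t|)).sum := by
  apply List.sum_nonneg
  intro y hy
  simp only [List.mem_map] at hy
  obtain ⟨z, _, hz⟩ := hy
  rw [← hz]; exact abs_nonneg z

lemma slot (F : ℝ → ℝ) (k : ℕ)
    (LB : ∀ R : ℝ, 0 ≤ R → ∃ C, ∀ x, |x| ≤ R → |F x| ≤ C)
    (hmix : ∀ L : List ℝ, L.length = k + 1 → ∀ x, D L F x = 0)
    (L₁ L₂ : List ℝ) (t : ℝ) (hlen : L₁.length + L₂.length + 1 = k) :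
    D (L₁ ++ t :: L₂) F 0 = t * D (L₁ ++ 1 :: L₂) F 0 := by
  set g : ℝ → ℝ := D L₂ F with hg
  set E : ℝ → ℝ := fun s => D (L₁ ++ s :: L₂) F 0 with hE
  have hEeq : ∀ s, E s = D L₁ (fdiff s g) 0 := by
    intro s
    simp only [hE, D_append, D_cons, hg]
  have hadd : ∀ a b : ℝ, E (a + b) = E a + E b := by
    intro a b
    rw [hEeq, hEeq, hEeq]
    have h3 : fdiff (a + b) g = fun y =>
        (fdiff a g y + fdiff b g y) + fdiff a (fdiff b g) y := by
      funext y; rw [fdiff_add3]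
    rw [h3]
    have h4 := D_addfun L₁ (fun y => fdiff a g y + fdiff b g y) (fdiff a (fdiff b g)) 0
    rw [h4, D_addfun L₁ (fdiff a g) (fdiff b g) 0]
    have h5 : D L₁ (fdiff a (fdiff b g)) 0 = D (L₁ ++ a :: b :: L₂) F 0 := by
      rw [D_append]
      simp only [D_cons, hg]
    rw [h5, hmix (L₁ ++ a :: b :: L₂) (by simp; omega) 0]
    ring
  obtain ⟨C, hC⟩ := LB ((L₁.map (fun t => |t|)).sum + (L₂.map (fun t => |t|)).sum + 1)
    (by linarith [sum_abs_nonneg L₁, sum_abs_nonneg L₂])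
  have hbd : ∀ s, s ∈ Set.Icc (0:ℝ) 1 → |E s| ≤ 2^k * C := by
    intro s hs
    have hlen2 : (L₁ ++ s :: L₂).length = k := by simp; omega
    have := bnd_list F C (L₁ ++ s :: L₂) 0 ?_
    · rw [hlen2] at this; exact this
    · intro y hy
      apply hC
      have hsum : ((L₁ ++ s :: L₂).map (fun t => |t|)).sum
          = (L₁.map (fun t => |t|)).sum + (|s| + (L₂.map (fun t => |t|)).sum) := by
        simp [List.map_append, List.sum_append]
      have hs1 : |s| ≤ 1 := by
        rw [abs_of_nonneg hs.1]; exact hs.2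
      rw [hsum] at hy
      simpa using le_trans (by simpa using hy) (by linarith)
  have := cauchy_linear E (2^k * C) hadd hbd t
  simpa only [hE] using this

lemma prod_slots (F : ℝ → ℝ) (k : ℕ)
    (LB : ∀ R : ℝ, 0 ≤ R → ∃ C, ∀ x, |x| ≤ R → |F x| ≤ C)
    (hmix : ∀ L : List ℝ, L.length = k + 1 → ∀ x, D L F x = 0) :
    ∀ (L₂ L₁ : List ℝ), L₁.length + L₂.length = k →
      D (L₁ ++ L₂) F 0 = L₂.prod * D (L₁ ++ List.replicate L₂.length 1) F 0 := by
  intro L₂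
  induction L₂ with
  | nil => intro L₁ _; simp
  | cons t L₂' ih =>
    intro L₁ hlen
    have h1 : D (L₁ ++ t :: L₂') F 0 = t * D (L₁ ++ 1 :: L₂') F 0 := by
      apply slot F k LB hmix
      simp at hlen ⊢; omega
    have h2 : L₁ ++ 1 :: L₂' = (L₁ ++ [1]) ++ L₂' := by simp
    have h3 : (L₁ ++ [1]).length + L₂'.length = k := by simp at hlen ⊢; omega
    have h4 := ih (L₁ ++ [(1:ℝ)]) h3
    rw [h1, h2, h4]
    have h5 : (L₁ ++ [(1:ℝ)]) ++ List.replicate L₂'.length 1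
        = L₁ ++ List.replicate (t :: L₂').length 1 := by
      simp [List.replicate_succ, List.append_assoc]
    rw [h5]
    simp only [List.prod_cons]
    ring

lemma mono_eval (k : ℕ) (F : ℝ → ℝ) (hm : IsMonomial k F) (h x : ℝ) :
    (fdiff h)^[k] F x = (k.factorial : ℝ) * F h := by
  have := hm x h
  have hk : (k.factorial : ℝ) ≠ 0 := by
    exact_mod_cast k.factorial_ne_zero
  field_simp at this
  linarith [this]

lemma mono_scale (k : ℕ) (F : ℝ → ℝ) (hm : IsMonomial k F) (n : ℕ) (h : ℝ) :
    F ((n:ℝ) * h) = (n:ℝ)^k * F h := by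
  have hper : ∀ x, (fdiff h)^[k] F (x + h) = (fdiff h)^[k] F x := by
    intro x
    rw [mono_eval k F hm h (x+h), mono_eval k F hm h x]
  have hsc := scaling h k F hper n 0
  rw [mono_eval k F hm ((n:ℝ)*h) 0, mono_eval k F hm h 0] at hsc
  have hk : (k.factorial : ℝ) ≠ 0 := by exact_mod_cast k.factorial_ne_zero
  have h2 : (k.factorial:ℝ) * F ((n:ℝ)*h) = (k.factorial:ℝ) * ((n:ℝ)^k * F h) := by
    rw [hsc]; ring
  exact mul_left_cancel₀ hk h2

lemma fdiff_neg_iter (h : ℝ) (g : ℝ → ℝ) : ∀ (j : ℕ) (x : ℝ),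
    (fdiff (-h))^[j] g x = (-1:ℝ)^j * (fdiff h)^[j] g (x - (j:ℝ) * h) := by
  intro j
  induction j with
  | zero => intro x; simp
  | succ j ih =>
    intro x
    rw [Function.iterate_succ_apply', Function.iterate_succ_apply']
    simp only [fdiff]
    rw [ih (x + -h), ih x]
    push_cast
    ring_nf

lemma mono_neg (k : ℕ) (F : ℝ → ℝ) (hm : IsMonomial k F) (h : ℝ) :
    F (-h) = (-1:ℝ)^k * F h := by
  have h1 := mono_eval k F hm (-h) ((k:ℝ) * h)
  rw [fdiff_neg_iter h F k ((k:ℝ)*h)] at h1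
  simp only [sub_self] at h1
  rw [mono_eval k F hm h 0] at h1
  have hk : (k.factorial : ℝ) ≠ 0 := by exact_mod_cast k.factorial_ne_zero
  have h2 : (k.factorial:ℝ) * F (-h) = (k.factorial:ℝ) * ((-1:ℝ)^k * F h) := by
    rw [← h1]; ring
  exact mul_left_cancel₀ hk h2

lemma mono_LB (k : ℕ) (F : ℝ → ℝ) (hm : IsMonomial k F) (B δ : ℝ) (hδ : 0 < δ)
    (hB : ∀ h : ℝ, 0 ≤ h → h ≤ δ → |F h| ≤ B) :
    ∀ R : ℝ, 0 ≤ R → ∃ C, ∀ x, |x| ≤ R → |F x| ≤ C := by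
  intro R hR
  obtain ⟨n, hn⟩ := exists_nat_gt (R / δ)
  refine ⟨((n:ℝ)+1)^k * B, ?_⟩
  have key : ∀ x, 0 ≤ x → x ≤ R → |F x| ≤ ((n:ℝ)+1)^k * B := by
    intro x hx hxR
    have hne : ((n:ℝ)+1) ≠ 0 := by positivity
    have hxe : ((n+1:ℕ):ℝ) * (x / ((n:ℝ)+1)) = x := by push_cast; field_simp
    have := mono_scale k F hm (n+1) (x / ((n:ℝ)+1))
    rw [hxe] at this
    rw [this]
    have hdiv : x / ((n:ℝ)+1) ≤ δ := by
      rw [div_le_iff₀ (by positivity)]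
      rw [div_lt_iff₀ hδ] at hn
      nlinarith [Nat.cast_nonneg (α := ℝ) n]
    have hdiv0 : 0 ≤ x / ((n:ℝ)+1) := by positivity
    have hFb := hB _ hdiv0 hdiv
    rw [abs_mul, abs_pow]
    push_cast
    rw [abs_of_nonneg (by positivity : (0:ℝ) ≤ (n:ℝ)+1)]
    have hp : (0:ℝ) ≤ ((n:ℝ)+1)^k := by positivity
    exact mul_le_mul_of_nonneg_left hFb hp
  intro x hx
  rcases le_or_gt 0 x with hx0 | hx0
  · exact key x hx0 (by rw [abs_of_nonneg hx0] at hx; exact hx)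
  · have : F x = (-1:ℝ)^k * F (-x) := by
      have := mono_neg k F hm (-x)
      simp only [neg_neg] at this
      rw [this]
    rw [this, abs_mul, abs_pow, abs_neg, abs_one, one_pow, one_mul]
    apply key (-x) (by linarith) (by rw [abs_of_neg hx0] at hx; linarith)

lemma iter_const (h c : ℝ) (m : ℕ) (hm : 1 ≤ m) (x : ℝ) :
    (fdiff h)^[m] (fun _ => c) x = 0 := by
  obtain ⟨m', rfl⟩ : ∃ m', m = m' + 1 := ⟨m - 1, by omega⟩
  rw [Function.iterate_succ_apply]
  have : fdiff h (fun _ => c) = fun _ => (0:ℝ) := by funext y; simp [fdiff]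
  rw [this]
  exact iter_fdiff_zero h m' x

lemma bnd_right (h : ℝ) (hh : 0 ≤ h) (f : ℝ → ℝ) (C : ℝ) : ∀ (n : ℕ) (x : ℝ),
    (∀ y, x ≤ y → y ≤ x + (n:ℝ) * h → |f y| ≤ C) → |(fdiff h)^[n] f x| ≤ 2^n * C := by
  intro n
  induction n with
  | zero => intro x hb; simpa using hb x le_rfl (by simp)
  | succ n ih =>
    intro x hb
    rw [Function.iterate_succ_apply']
    have e1 : |(fdiff h)^[n] f (x + h)| ≤ 2^n * C := by
      apply ih
      intro y hy1 hy2
      apply hb y (by linarith)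
      push_cast
      linarith
    have e2 : |(fdiff h)^[n] f x| ≤ 2^n * C := by
      apply ih
      intro y hy1 hy2
      apply hb y hy1
      push_cast
      linarith
    simp only [fdiff]
    calc |(fdiff h)^[n] f (x + h) - (fdiff h)^[n] f x|
        ≤ |(fdiff h)^[n] f (x + h)| + |(fdiff h)^[n] f x| := abs_sub _ _
      _ ≤ 2^n * C + 2^n * C := by linarith
      _ = 2^(n+1) * C := by ring

end Aux

theorem stmt19 (N : ℕ) (f : ℝ → ℝ)
    (hf : ∀ x h : ℝ, ((fdiff h)^[N + 1] f) x = 0)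
    (F : ℕ → (ℝ → ℝ)) (hmono : ∀ k ≤ N, IsMonomial k (F k))
    (hdecomp : ∀ x : ℝ, f x = ∑ k ∈ Finset.range (N + 1), F k x)
    (hdisc : ¬ Continuous (F N)) :
    ∀ a b : ℝ, a < b → ∀ M : ℝ, ∃ x ∈ Set.Icc a b, M < |f x| := by
  classical
  open Aux in
  rcases Nat.eq_zero_or_pos N with hN0 | hNpos
  · exfalso
    apply hdisc
    subst hN0
    have hm := hmono 0 (le_refl 0)
    have hconstF : F 0 = fun _ => F 0 0 := by
      funext x
      have := hm x 0
      simpa using this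
    rw [hconstF]
    exact continuous_const
  · intro a b hab M
    by_contra hcon
    push_neg at hcon
    have hm := hmono N le_rfl
    have hNfac : (N.factorial : ℝ) ≠ 0 := by exact_mod_cast N.factorial_ne_zero
    have hNfacpos : (0:ℝ) < (N.factorial : ℝ) := by exact_mod_cast N.factorial_pos
    -- Step A
    have stepA : ∀ h x, (fdiff h)^[N] f x = (N.factorial:ℝ) * F N h := by
      intro h x
      have hfe : f = fun y => ∑ k ∈ Finset.range (N+1), F k y := funext hdecomp
      rw [hfe, Aux.iter_sum]
      rw [Finset.sum_eq_single N]
      · exact Aux.mono_eval N (F N) hm h x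
      · intro k hk hkN
        have hkN' : k < N := by
          simp only [Finset.mem_range] at hk; omega
        have hsplit : N = (N - k) + k := by omega
        rw [hsplit, Function.iterate_add_apply]
        have hconstk : (fdiff h)^[k] (F k) = fun _ => (k.factorial:ℝ) * F k h :=
          funext (fun z => Aux.mono_eval k (F k) (hmono k (le_of_lt hkN')) h z)
        rw [hconstk]
        exact Aux.iter_const h _ (N-k) (by omega) x
      · intro hN; simp at hN
    -- Step B
    set δ := (b - a)/(N:ℝ) with hδ
    have hNR : (0:ℝ) < (N:ℝ) := by exact_mod_cast hNpos
    have hδpos : 0 < δ := div_pos (by linarith) hNR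
    have stepB : ∀ h, 0 ≤ h → h ≤ δ → |F N h| ≤ 2^N * M / (N.factorial:ℝ) := by
      intro h h0 hδh
      have hb : |(fdiff h)^[N] f a| ≤ 2^N * M := by
        apply Aux.bnd_right h h0
        intro y hy1 hy2
        apply hcon
        refine ⟨hy1, ?_⟩
        have hnh : (N:ℝ) * h ≤ b - a := by
          have := (le_div_iff₀ hNR).mp hδh
          linarith
        linarith
      rw [stepA h a, abs_mul, abs_of_pos hNfacpos] at hb
      rw [le_div_iff₀ hNfacpos]
      linarith
    have LB := Aux.mono_LB N (F N) hm (2^N * M / (N.factorial:ℝ)) δ hδpos stepB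
    have hord : ∀ h x, (fdiff h)^[N+1] (F N) x = 0 := by
      intro h x
      rw [Function.iterate_succ_apply']
      have hc : (fdiff h)^[N] (F N) = fun _ => (N.factorial:ℝ) * F N h :=
        funext (Aux.mono_eval N (F N) hm h)
      rw [hc]
      simp [fdiff]
    have hmix := Aux.mixed_vanish (N+1) (F N) LB hord
    have hfin : ∀ h, F N h
        = (Aux.D (List.replicate N 1) (F N) 0 / (N.factorial:ℝ)) * h^N := by
      intro h
      have h1 : (N.factorial:ℝ) * F N h = (fdiff h)^[N] (F N) 0 :=
        (Aux.mono_eval N (F N) hm h 0).symm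
      have h2 : (fdiff h)^[N] (F N) 0 = Aux.D (List.replicate N h) (F N) 0 := by
        rw [Aux.D_replicate]
      have h3 := Aux.prod_slots (F N) N LB hmix (List.replicate N h) [] (by simp)
      simp only [List.nil_append] at h3
      rw [List.prod_replicate, List.length_replicate] at h3
      have h4 : (N.factorial:ℝ) * F N h
          = h^N * Aux.D (List.replicate N 1) (F N) 0 := by
        rw [h1, h2, h3]
      have := h4
      field_simp
      linear_combination h4
    apply hdisc
    have hFform : F N = fun h =>
        (Aux.D (List.replicate N 1) (F N) 0 / (N.factorial:ℝ)) * h^N := funext hfin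
    rw [hFform]
    exact continuous_const.mul (continuous_pow N)
end
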